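/- arXiv:1412.2520 — 8 statements merged into one kernel-verified Lean document; each statement's English description precedes it below -/
import Mathlib

section
/- Let n, d be nonnegative integers, let V ⊆ ℚ^(n+d) and W ⊆ ℤ^(n+d) be finite sets, and let P = conv(V) + cone(W). Define T = conv(V) + (n+d)·conv(W ∪ {0}). Then conv(P ∩ (ℤ^n × ℝ^d)) = conv(T ∩ (ℤ^n × ℝ^d)) + cone(W). -/
open Pointwise

/-- The conic hull of a set `W`: all finite nonnegative combinations of elements of `W`. -/
def coneHull {M : Type*} [AddCommMonoid M] [Module ℝ M] (W : Set M) : Set M :=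
  {x | ∃ (s : Finset M) (μ : M → ℝ), ↑s ⊆ W ∧ (∀ w ∈ s, 0 ≤ μ w) ∧ x = ∑ w ∈ s, μ w • w}

section helpers
variable {E : Type*} [AddCommGroup E] [Module ℝ E] (X : Set E)

lemma zero_mem_coneHull : (0 : E) ∈ coneHull X :=
  ⟨∅, 0, by simp, by simp, by simp⟩

lemma smul_mem_coneHull {w : E} (hw : w ∈ X) {c : ℝ} (hc : 0 ≤ c) : c • w ∈ coneHull X :=
  ⟨{w}, fun _ => c, by simpa using hw, fun _ _ => hc, by simp⟩

lemma add_mem_coneHull {x y : E} (hx : x ∈ coneHull X) (hy : y ∈ coneHull X) :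
    x + y ∈ coneHull X := by
  classical
  obtain ⟨s, μ, hs, hμ, rfl⟩ := hx
  obtain ⟨t, ν, ht, hν, rfl⟩ := hy
  refine ⟨s ∪ t, fun w => (if w ∈ s then μ w else 0) + (if w ∈ t then ν w else 0), ?_, ?_, ?_⟩
  · simp only [Finset.coe_union, Set.union_subset_iff]; exact ⟨hs, ht⟩
  · intro w _
    show 0 ≤ (if w ∈ s then μ w else 0) + (if w ∈ t then ν w else 0)
    have h1 : 0 ≤ (if w ∈ s then μ w else 0) := by split <;> [exact hμ w ‹_›; rfl]
    have h2 : 0 ≤ (if w ∈ t then ν w else 0) := by split <;> [exact hν w ‹_›; rfl]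
    linarith
  · simp only [add_smul, ite_smul, zero_smul]
    rw [Finset.sum_add_distrib, Finset.sum_ite_mem, Finset.sum_ite_mem,
      Finset.union_inter_cancel_left, Finset.union_inter_cancel_right]

lemma smul_mem_coneHull' {c : ℝ} (hc : 0 ≤ c) {x : E} (hx : x ∈ coneHull X) :
    c • x ∈ coneHull X := by
  obtain ⟨s, μ, hs, hμ, rfl⟩ := hx
  refine ⟨s, fun w => c * μ w, hs, fun w hw => mul_nonneg hc (hμ w hw), ?_⟩
  rw [Finset.smul_sum]
  exact Finset.sum_congr rfl fun w _ => by rw [smul_smul]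

lemma convex_coneHull : Convex ℝ (coneHull X) := fun x hx y hy a b ha hb _ =>
  add_mem_coneHull X (smul_mem_coneHull' X ha hx) (smul_mem_coneHull' X hb hy)

lemma subset_coneHull : X ⊆ coneHull X := fun w hw => by
  simpa using smul_mem_coneHull X hw (zero_le_one' ℝ)

lemma convexHull_insert_zero_subset_coneHull :
    convexHull ℝ (insert (0:E) X) ⊆ coneHull X :=
  convexHull_min (Set.insert_subset (zero_mem_coneHull X) (subset_coneHull X)) (convex_coneHull X)

/-- sums with small total mass lie in the convex hull with 0 adjoined -/
lemma sum_mem_convexHull_insert_zero (s : Finset E) (a : E → ℝ)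
    (ha : ∀ w ∈ s, 0 ≤ a w) (hs : ∑ w ∈ s, a w ≤ 1) (hsub : ↑s ⊆ X) :
    ∑ w ∈ s, a w • w ∈ convexHull ℝ (insert (0:E) X) := by
  set m := ∑ w ∈ s, a w with hm
  rcases eq_or_lt_of_le (Finset.sum_nonneg ha) with h0 | h0
  · have hz : ∀ w ∈ s, a w = 0 := (Finset.sum_eq_zero_iff_of_nonneg ha).mp h0.symm
    rw [Finset.sum_congr rfl fun w hw => by rw [hz w hw, zero_smul]]
    simp only [Finset.sum_const, smul_zero]
    exact subset_convexHull ℝ _ (Set.mem_insert 0 X)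
  · have hy : s.centerMass a id ∈ convexHull ℝ X :=
      Finset.centerMass_mem_convexHull s ha h0 (fun i hi => hsub hi)
    have key : ∑ w ∈ s, a w • w = m • s.centerMass a id + (1 - m) • (0:E) := by
      rw [Finset.centerMass, smul_smul, smul_zero, add_zero, ← hm,
        mul_inv_cancel₀ h0.ne', one_smul]
      simp [Finset.smul_sum]
    rw [key]
    exact (convex_convexHull ℝ (insert (0:E) X)) (convexHull_mono (Set.subset_insert 0 X) hy)
      (subset_convexHull ℝ _ (Set.mem_insert 0 X)) (le_of_lt h0) (by linarith) (by ring)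

lemma carath_step :
    ∀ (m : ℕ) (s : Finset E) (μ : E → ℝ), s.card = m → ↑s ⊆ X → (∀ w ∈ s, 0 ≤ μ w) →
    ∃ (t : Finset E) (ν : E → ℝ), ↑t ⊆ X ∧ (∀ w ∈ t, 0 ≤ ν w) ∧
      (∑ w ∈ s, μ w • w) = ∑ w ∈ t, ν w • w ∧
      LinearIndependent ℝ (Subtype.val : {x // x ∈ t} → E) := by
  classical
  intro m
  induction m using Nat.strong_induction_on with
  | _ m IH =>
    intro s μ hcard hsX hμ
    by_cases hli : LinearIndependent ℝ (Subtype.val : {x // x ∈ s} → E)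
    · exact ⟨s, μ, hsX, hμ, rfl, hli⟩
    · -- extract a nontrivial relation
      rw [Fintype.not_linearIndependent_iff] at hli
      obtain ⟨g, hg0, i₀, hi₀⟩ := hli
      set c : E → ℝ := fun w => if hw : w ∈ s then g ⟨w, hw⟩ else 0 with hc
      have hcsum : ∑ w ∈ s, c w • w = 0 := by
        rw [← hg0, ← Finset.sum_coe_sort s (fun w => c w • w)]
        exact Finset.sum_congr rfl fun i _ => by simp [hc, i.2]
      have hcne : ∃ w ∈ s, c w ≠ 0 := ⟨i₀, i₀.2, by simp [hc, i₀.2, hi₀]⟩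
      -- key step applicable to c or -c
      have key : ∀ c' : E → ℝ, (∑ w ∈ s, c' w • w = 0) → (∃ w ∈ s, 0 < c' w) →
          ∃ (t : Finset E) (ν : E → ℝ), ↑t ⊆ X ∧ (∀ w ∈ t, 0 ≤ ν w) ∧
            (∑ w ∈ s, μ w • w) = ∑ w ∈ t, ν w • w ∧
            LinearIndependent ℝ (Subtype.val : {x // x ∈ t} → E) := by
        intro c' hsum0 ⟨wp, hwp, hwppos⟩
        have hposne : (s.filter (fun w => 0 < c' w)).Nonempty :=
          ⟨wp, Finset.mem_filter.mpr ⟨hwp, hwppos⟩⟩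
        obtain ⟨w₀, hw₀mem, hw₀min⟩ :=
          Finset.exists_min_image (s.filter (fun w => 0 < c' w)) (fun w => μ w / c' w) hposne
        rw [Finset.mem_filter] at hw₀mem
        obtain ⟨hw₀s, hw₀pos⟩ := hw₀mem
        set τ : ℝ := μ w₀ / c' w₀ with hτ
        have hτnn : 0 ≤ τ := div_nonneg (hμ w₀ hw₀s) hw₀pos.le
        set μ' : E → ℝ := fun w => μ w - τ * c' w with hμ'
        have hμ'nn : ∀ w ∈ s, 0 ≤ μ' w := by
          intro w hw
          show 0 ≤ μ w - τ * c' w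
          rcases le_or_gt (c' w) 0 with h | h
          · nlinarith [hμ w hw]
          · have h2 : τ ≤ μ w / c' w := hw₀min w (Finset.mem_filter.mpr ⟨hw, h⟩)
            have h3 : τ * c' w ≤ μ w := (le_div_iff₀ h).mp h2
            linarith
        have hμ'w₀ : μ' w₀ = 0 := by
          show μ w₀ - τ * c' w₀ = 0
          rw [hτ, div_mul_cancel₀ _ hw₀pos.ne']; ring
        have hsum' : ∑ w ∈ s, μ' w • w = ∑ w ∈ s, μ w • w := by
          have : ∀ w ∈ s, μ' w • w = μ w • w - τ • (c' w • w) := by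
            intro w _
            show (μ w - τ * c' w) • w = _
            rw [sub_smul, smul_smul]
          rw [Finset.sum_congr rfl this, Finset.sum_sub_distrib, ← Finset.smul_sum, hsum0,
            smul_zero, sub_zero]
        have herase : ∑ w ∈ s.erase w₀, μ' w • w = ∑ w ∈ s, μ' w • w :=
          Finset.sum_erase s (by rw [hμ'w₀, zero_smul])
        have hcard' : (s.erase w₀).card < m := by
          rw [← hcard]; exact Finset.card_erase_lt_of_mem hw₀s
        obtain ⟨t, ν, htX, hν, hteq, htli⟩ := IH _ hcard' (s.erase w₀) μ' rfl
          (Set.Subset.trans (Finset.coe_subset.mpr (Finset.erase_subset w₀ s)) hsX)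
          (fun w hw => hμ'nn w (Finset.mem_of_mem_erase hw))
        exact ⟨t, ν, htX, hν, by rw [← hsum', ← herase, hteq], htli⟩
      obtain ⟨wn, hwn, hwnne⟩ := hcne
      rcases lt_or_gt_of_ne hwnne with hneg | hpos
      · refine key (fun w => -c w) ?_ ⟨wn, hwn, by simpa using hneg⟩
        simp only [neg_smul, Finset.sum_neg_distrib, hcsum, neg_zero]
      · exact key c hcsum ⟨wn, hwn, hpos⟩

lemma coneHull_carath {x : E} (hx : x ∈ coneHull X) :
    ∃ (s : Finset E) (μ : E → ℝ), ↑s ⊆ X ∧ (∀ w ∈ s, 0 ≤ μ w) ∧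
      x = ∑ w ∈ s, μ w • w ∧ LinearIndependent ℝ (Subtype.val : {w // w ∈ s} → E) := by
  obtain ⟨s, μ, h1, h2, rfl⟩ := hx
  obtain ⟨t, ν, ht1, ht2, heq, hli⟩ := carath_step X s.card s μ rfl h1 h2
  exact ⟨t, ν, ht1, ht2, heq, hli⟩

end helpers

theorem mixed_integer_hull_decomposition (n d : ℕ)
    (V : Finset ((Fin n → ℚ) × (Fin d → ℚ)))
    (W : Finset ((Fin n → ℤ) × (Fin d → ℤ)))
    (VR WR : Set ((Fin n → ℝ) × (Fin d → ℝ)))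
    (hVR : VR = (fun (v : (Fin n → ℚ) × (Fin d → ℚ)) => ((fun i => ((v.1 i : ℝ))), fun j => ((v.2 j : ℝ)))) '' ↑V)
    (hWR : WR = (fun (w : (Fin n → ℤ) × (Fin d → ℤ)) => ((fun i => ((w.1 i : ℝ))), fun j => ((w.2 j : ℝ)))) '' ↑W)
    (P T MI : Set ((Fin n → ℝ) × (Fin d → ℝ)))
    (hP : P = convexHull ℝ VR + coneHull WR)
    (hT : T = convexHull ℝ VR + ((n + d : ℕ) : ℝ) • convexHull ℝ (WR ∪ {0}))
    (hMI : MI = {p | ∀ i, ∃ z : ℤ, p.1 i = (z : ℝ)}) :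
    convexHull ℝ (P ∩ MI) = convexHull ℝ (T ∩ MI) + coneHull WR := by
  classical
  have hWint : ∀ w ∈ WR, ∀ i, ∃ z : ℤ, w.1 i = (z : ℝ) := by
    rw [hWR]; rintro w ⟨w', _, rfl⟩ i; exact ⟨w'.1 i, rfl⟩
  have hfin : Module.finrank ℝ ((Fin n → ℝ) × (Fin d → ℝ)) = n + d := by
    rw [Module.finrank_prod, Module.finrank_fin_fun, Module.finrank_fin_fun]
  have hWR0 : WR ∪ {0} = insert (0 : ((Fin n → ℝ) × (Fin d → ℝ))) WR := Set.union_singleton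
  -- T ⊆ P
  have hTP : T ⊆ P := by
    rw [hT, hP, hWR0]
    rintro x ⟨v, hv, u, hu, rfl⟩
    obtain ⟨u', hu', rfl⟩ := hu
    exact ⟨v, hv, _, smul_mem_coneHull' WR (by positivity)
      (convexHull_insert_zero_subset_coneHull WR hu'), rfl⟩
  -- step: adding a single scaled generator preserves the hull
  have step : ∀ w ∈ WR, ∀ μ : ℝ, 0 ≤ μ → ∀ x ∈ convexHull ℝ (P ∩ MI),
      x + μ • w ∈ convexHull ℝ (P ∩ MI) := by
    intro w hw μ hμ x hx
    set k : ℕ := ⌈μ⌉₊ with hk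
    have hμk : μ ≤ (k : ℝ) := Nat.le_ceil μ
    have hC1 : ∀ p ∈ P ∩ MI, p + (k : ℝ) • w ∈ P ∩ MI := by
      rintro p ⟨hpP, hpMI⟩
      constructor
      · rw [hP] at hpP ⊢
        obtain ⟨v, hv, r, hr, rfl⟩ := hpP
        exact ⟨v, hv, r + (k : ℝ) • w,
          add_mem_coneHull WR hr (smul_mem_coneHull WR hw (by positivity)),
          (add_assoc _ _ _).symm⟩
      · rw [hMI] at hpMI ⊢
        intro i
        obtain ⟨z, hz⟩ := hpMI i
        obtain ⟨zw, hzw⟩ := hWint w hw i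
        refine ⟨z + k * zw, ?_⟩
        show p.1 i + ((k : ℝ) • w).1 i = _
        rw [Prod.smul_fst, Pi.smul_apply, smul_eq_mul, hz, hzw]
        push_cast; ring
    have hC2 : x + (k : ℝ) • w ∈ convexHull ℝ (P ∩ MI) := by
      have h1 : x + (k : ℝ) • w ∈ convexHull ℝ (P ∩ MI) + convexHull ℝ {(k : ℝ) • w} :=
        ⟨x, hx, (k : ℝ) • w, subset_convexHull ℝ _ rfl, rfl⟩
      rw [← convexHull_add] at h1
      refine convexHull_mono ?_ h1
      rintro y ⟨p, hp, u, rfl, rfl⟩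
      exact hC1 p hp
    rcases Nat.eq_zero_or_pos k with hk0 | hk0
    · have hμ0 : μ = 0 := le_antisymm (by rw [hk0] at hμk; exact_mod_cast hμk) hμ
      simpa [hμ0] using hx
    · have hkpos : (0 : ℝ) < k := by exact_mod_cast hk0
      have hcomb : x + μ • w = (1 - μ / k) • x + (μ / k) • (x + (k : ℝ) • w) := by
        rw [smul_add, smul_smul, div_mul_cancel₀ μ hkpos.ne', sub_smul, one_smul]
        abel
      rw [hcomb]
      exact (convex_convexHull ℝ (P ∩ MI)) hx hC2
        (by rw [sub_nonneg, div_le_one hkpos]; exact hμk)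
        (by positivity) (by ring)
  -- absorb a whole cone element
  have absorb : ∀ (s : Finset ((Fin n → ℝ) × (Fin d → ℝ))) (μ : ((Fin n → ℝ) × (Fin d → ℝ)) → ℝ), ↑s ⊆ WR → (∀ w ∈ s, 0 ≤ μ w) →
      ∀ x ∈ convexHull ℝ (P ∩ MI), x + ∑ w ∈ s, μ w • w ∈ convexHull ℝ (P ∩ MI) := by
    intro s
    induction s using Finset.induction_on with
    | empty => intro μ _ _ x hx; simpa using hx
    | @insert a s ha IH =>
      intro μ hsub hμ x hx
      rw [Finset.sum_insert ha, ← add_assoc]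
      exact IH μ (fun w hw => hsub (Finset.mem_insert_of_mem hw))
        (fun w hw => hμ w (Finset.mem_insert_of_mem hw))
        (x + μ a • a)
        (step a (hsub (Finset.mem_insert_self a s)) (μ a)
          (hμ a (Finset.mem_insert_self a s)) x hx)
  apply Set.Subset.antisymm
  · -- hard direction
    apply convexHull_min ?_ ((convex_convexHull ℝ (T ∩ MI)).add (convex_coneHull WR))
    rintro p ⟨hpP, hpMI⟩
    rw [hP] at hpP
    obtain ⟨v, hv, r, hr, rfl⟩ := hpP
    obtain ⟨s, μ, hsX, hμ, hreq, hli⟩ := coneHull_carath WR hr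
    have hcard : s.card ≤ n + d := by
      have := hli.fintype_card_le_finrank
      rwa [Fintype.card_coe, hfin] at this
    have hsplit : r = (∑ w ∈ s, Int.fract (μ w) • w) + ∑ w ∈ s, ((⌊μ w⌋ : ℤ) : ℝ) • w := by
      rw [hreq, ← Finset.sum_add_distrib]
      refine Finset.sum_congr rfl fun w _ => ?_
      rw [← add_smul, Int.fract_add_floor]
    have hqcone : (∑ w ∈ s, ((⌊μ w⌋ : ℤ) : ℝ) • w) ∈ coneHull WR :=
      ⟨s, fun w => ((⌊μ w⌋ : ℤ) : ℝ), hsX,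
        fun w hw => by show (0:ℝ) ≤ ((⌊μ w⌋ : ℤ) : ℝ); exact_mod_cast Int.floor_nonneg.mpr (hμ w hw), rfl⟩
    have hqint : ∀ i, ∃ z : ℤ, (∑ w ∈ s, ((⌊μ w⌋ : ℤ) : ℝ) • w).1 i = (z : ℝ) := by
      refine Finset.sum_induction _ (fun p : ((Fin n → ℝ) × (Fin d → ℝ)) => ∀ i, ∃ z : ℤ, p.1 i = (z : ℝ)) ?_ ?_ ?_
      · intro a b hA hB i
        obtain ⟨za, hza⟩ := hA i; obtain ⟨zb, hzb⟩ := hB i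
        exact ⟨za + zb, by rw [Prod.fst_add, Pi.add_apply, hza, hzb]; push_cast; ring⟩
      · intro i; exact ⟨0, by simp⟩
      · intro w hw i
        obtain ⟨zw, hzw⟩ := hWint w (hsX hw) i
        refine ⟨⌊μ w⌋ * zw, ?_⟩
        rw [Prod.smul_fst, Pi.smul_apply, smul_eq_mul, hzw]
        push_cast; ring
    have hfT : (∑ w ∈ s, Int.fract (μ w) • w) ∈
        ((n + d : ℕ) : ℝ) • convexHull ℝ (insert (0 : ((Fin n → ℝ) × (Fin d → ℝ))) WR) := by
      rcases Nat.eq_zero_or_pos (n + d) with h0 | hpos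
      · have hs0 : s = ∅ := Finset.card_eq_zero.mp (Nat.le_zero.mp (h0 ▸ hcard))
        rw [hs0, Finset.sum_empty, h0]
        rw [Nat.cast_zero, Set.zero_smul_set ⟨0, subset_convexHull ℝ _ (Set.mem_insert 0 WR)⟩]
        rfl
      · have hc : (0 : ℝ) < ((n + d : ℕ) : ℝ) := by exact_mod_cast hpos
        have hg : ∑ w ∈ s, (Int.fract (μ w) / ((n + d : ℕ) : ℝ)) • w ∈
            convexHull ℝ (insert (0 : ((Fin n → ℝ) × (Fin d → ℝ))) WR) := by
          refine sum_mem_convexHull_insert_zero WR s _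
            (fun w _ => div_nonneg (Int.fract_nonneg _) hc.le) ?_ hsX
          rw [← Finset.sum_div, div_le_one hc]
          calc ∑ w ∈ s, Int.fract (μ w) ≤ s.card • (1 : ℝ) :=
                Finset.sum_le_card_nsmul _ _ 1 (fun w _ => (Int.fract_lt_one _).le)
            _ = s.card := by simp
            _ ≤ ((n + d : ℕ) : ℝ) := by exact_mod_cast hcard
        have heq : (∑ w ∈ s, Int.fract (μ w) • w) =
            ((n + d : ℕ) : ℝ) • ∑ w ∈ s, (Int.fract (μ w) / ((n + d : ℕ) : ℝ)) • w := by
          rw [Finset.smul_sum]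
          refine Finset.sum_congr rfl fun w _ => ?_
          rw [smul_smul, mul_div_cancel₀ _ hc.ne']
        rw [heq]
        exact Set.smul_mem_smul_set hg
    have htT : v + ∑ w ∈ s, Int.fract (μ w) • w ∈ T := by
      rw [hT, hWR0]
      exact ⟨v, hv, _, hfT, rfl⟩
    have htMI : v + ∑ w ∈ s, Int.fract (μ w) • w ∈ MI := by
      rw [hMI] at hpMI ⊢
      intro i
      obtain ⟨zp, hzp⟩ := hpMI i
      obtain ⟨zq, hzq⟩ := hqint i
      refine ⟨zp - zq, ?_⟩
      have hvf : v + ∑ w ∈ s, Int.fract (μ w) • w =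
          (v + r) - ∑ w ∈ s, ((⌊μ w⌋ : ℤ) : ℝ) • w := by
        rw [hsplit]; abel
      rw [hvf]
      show (v + r).1 i - (∑ w ∈ s, ((⌊μ w⌋ : ℤ) : ℝ) • w).1 i = _
      rw [hzp, hzq]; push_cast; ring
    refine ⟨v + ∑ w ∈ s, Int.fract (μ w) • w, subset_convexHull ℝ _ ⟨htT, htMI⟩,
      ∑ w ∈ s, ((⌊μ w⌋ : ℤ) : ℝ) • w, hqcone, ?_⟩
    rw [hsplit]; abel
  · -- easy direction
    rintro x ⟨y, hy, r, hr, rfl⟩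
    have hy' : y ∈ convexHull ℝ (P ∩ MI) :=
      convexHull_mono (Set.inter_subset_inter_left MI hTP) hy
    obtain ⟨s, μ, hsX, hμ, rfl⟩ := hr
    exact absorb s μ hsX hμ y hy'
end

section
/- Let n, d be nonnegative integers, let V ⊆ ℚ^(n+d) and W ⊆ ℤ^(n+d) be finite sets, let P = conv(V) + cone(W), and define T = conv(V) + (n+d)·conv(W ∪ {0}). Then for every point x ∈ P ∩ (ℤ^n × ℝ^d) there exists a point z ∈ cone(W) ∩ ℤ^(n+d) such that x − z ∈ T ∩ (ℤ^n × ℝ^d). -/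
open Pointwise

/-- Conic Carathéodory: a nonnegative combination can be rewritten as a nonnegative
combination over a linearly independent subset. -/
lemma cone_caratheodory {E : Type*} [AddCommGroup E] [Module ℝ E] :
    ∀ (s : Finset E) (μ : E → ℝ), (∀ w ∈ s, 0 ≤ μ w) →
    ∃ t : Finset E, t ⊆ s ∧ ∃ ν : E → ℝ, (∀ w ∈ t, 0 ≤ ν w) ∧
      LinearIndependent ℝ (fun x => x : t → E) ∧
      ∑ w ∈ t, ν w • w = ∑ w ∈ s, μ w • w := by
  classical
  intro s
  induction s using Finset.strongInductionOn with
  | _ s IH =>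
  intro μ hμ
  by_cases hind : LinearIndependent ℝ (fun x => x : s → E)
  · exact ⟨s, subset_rfl, μ, hμ, hind, rfl⟩
  rw [Fintype.not_linearIndependent_iff] at hind
  obtain ⟨g, hg0, i0, hgi0⟩ := hind
  obtain ⟨ε, hε, -⟩ : ∃ ε : ℝ, 0 < ε * g i0 ∧ (ε = 1 ∨ ε = -1) := by
    rcases lt_or_gt_of_ne hgi0 with h | h
    · exact ⟨-1, by nlinarith, Or.inr rfl⟩
    · exact ⟨1, by nlinarith, Or.inl rfl⟩
  set c : E → ℝ := fun w => if h : w ∈ s then ε * g ⟨w, h⟩ else 0 with hc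
  have hcsum : ∑ w ∈ s, c w • w = 0 := by
    rw [← Finset.sum_attach s (fun w => c w • w)]
    have h1 : ∀ w ∈ s.attach, c w.1 • w.1 = ε • (g w • (w : E)) := by
      intro w _
      simp only [hc, dif_pos w.2, Subtype.coe_eta, smul_smul]
    rw [Finset.sum_congr rfl h1, ← Finset.smul_sum, ← Finset.univ_eq_attach, hg0, smul_zero]
  have hci0 : 0 < c i0.1 := by
    simpa only [hc, dif_pos i0.2, Subtype.coe_eta] using hε
  have hpos : (s.filter (fun w => 0 < c w)).Nonempty := ⟨i0.1, Finset.mem_filter.2 ⟨i0.2, hci0⟩⟩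
  obtain ⟨w₀, hw₀mem, hw₀min⟩ := Finset.exists_min_image _ (fun w => μ w / c w) hpos
  rw [Finset.mem_filter] at hw₀mem
  obtain ⟨hw₀s, hw₀c⟩ := hw₀mem
  set lam := μ w₀ / c w₀ with hlam
  have hlam0 : 0 ≤ lam := div_nonneg (hμ w₀ hw₀s) hw₀c.le
  set ν : E → ℝ := fun w => μ w - lam * c w with hν
  have hν0 : ∀ w ∈ s, 0 ≤ ν w := by
    intro w hws
    by_cases hcw : 0 < c w
    · have := hw₀min w (Finset.mem_filter.2 ⟨hws, hcw⟩)
      have := (le_div_iff₀ hcw).mp this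
      simp only [hν]; linarith
    · push_neg at hcw
      have := mul_nonpos_of_nonneg_of_nonpos hlam0 hcw
      have := hμ w hws
      simp only [hν]; linarith
  have hνw₀ : ν w₀ = 0 := by
    simp only [hν, hlam, div_mul_cancel₀ _ hw₀c.ne']; ring
  have hsum : ∑ w ∈ s, ν w • w = ∑ w ∈ s, μ w • w := by
    simp only [hν, sub_smul, Finset.sum_sub_distrib]
    have : ∑ w ∈ s, (lam * c w) • w = lam • ∑ w ∈ s, c w • w := by
      rw [Finset.smul_sum]; exact Finset.sum_congr rfl fun w _ => (smul_smul lam (c w) w).symm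
    rw [this, hcsum, smul_zero, sub_zero]
  obtain ⟨t, hts, ν', hν'0, hind', hsum'⟩ :=
    IH (s.erase w₀) (Finset.erase_ssubset hw₀s) ν (fun w hw => hν0 w (Finset.mem_of_mem_erase hw))
  refine ⟨t, hts.trans (Finset.erase_subset _ _), ν', hν'0, hind', ?_⟩
  rw [hsum', ← hsum]
  exact Finset.sum_erase _ (by rw [hνw₀, zero_smul])

lemma convex_subsum_mem {E : Type*} [AddCommGroup E] [Module ℝ E] {C : Set E}
    (hC : Convex ℝ C) (h0 : (0 : E) ∈ C) (t : Finset E) (a : E → ℝ)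
    (ha : ∀ w ∈ t, 0 ≤ a w) (has : ∑ w ∈ t, a w ≤ 1) (hw : ∀ w ∈ t, w ∈ C) :
    ∑ w ∈ t, a w • w ∈ C := by
  set σ := ∑ w ∈ t, a w with hσ
  rcases eq_or_lt_of_le (Finset.sum_nonneg ha) with h | h
  · have hz : ∀ w ∈ t, a w = 0 := (Finset.sum_eq_zero_iff_of_nonneg ha).mp h.symm
    have : ∑ w ∈ t, a w • w = 0 :=
      Finset.sum_eq_zero fun w hwt => by rw [hz w hwt, zero_smul]
    rw [this]; exact h0
  · have hq : ∑ w ∈ t, (a w / σ) • w ∈ C := by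
      apply hC.sum_mem (fun w hwt => div_nonneg (ha w hwt) h.le)
      · rw [← Finset.sum_div, div_self h.ne']
      · exact hw
    have key : ∑ w ∈ t, a w • w = σ • ∑ w ∈ t, (a w / σ) • w + (1 - σ) • (0 : E) := by
      rw [smul_zero, add_zero, Finset.smul_sum]
      refine Finset.sum_congr rfl fun w hwt => ?_
      rw [smul_smul, mul_div_cancel₀ _ h.ne']
    rw [key]
    exact hC hq h0 h.le (by linarith) (by ring)

theorem relevant_mixed_integer_points (n d : ℕ)
    (V : Finset ((Fin n → ℚ) × (Fin d → ℚ)))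
    (W : Finset ((Fin n → ℤ) × (Fin d → ℤ)))
    (VR WR : Set ((Fin n → ℝ) × (Fin d → ℝ)))
    (hVR : VR = (fun (v : (Fin n → ℚ) × (Fin d → ℚ)) =>
      ((fun i => ((v.1 i : ℝ))), fun j => ((v.2 j : ℝ)))) '' ↑V)
    (hWR : WR = (fun (w : (Fin n → ℤ) × (Fin d → ℤ)) =>
      ((fun i => ((w.1 i : ℝ))), fun j => ((w.2 j : ℝ)))) '' ↑W)
    (P T MI : Set ((Fin n → ℝ) × (Fin d → ℝ)))
    (hP : P = convexHull ℝ VR + coneHull WR)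
    (hT : T = convexHull ℝ VR + ((n + d : ℕ) : ℝ) • convexHull ℝ (WR ∪ {0}))
    (hMI : MI = {p | ∀ i, ∃ z : ℤ, p.1 i = (z : ℝ)}) :
    ∀ x ∈ P ∩ MI, ∃ z ∈ coneHull WR,
      (∀ i, ∃ k : ℤ, z.1 i = (k : ℝ)) ∧ (∀ j, ∃ k : ℤ, z.2 j = (k : ℝ)) ∧
      x - z ∈ T ∩ MI := by
  classical
  rintro x ⟨hxP, hxMI⟩
  rw [hMI] at hxMI
  rw [hP] at hxP
  obtain ⟨v, hv, y, hy, hvy⟩ := Set.mem_add.mp hxP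
  obtain ⟨s, μ, hsW, hμ0, hyeq⟩ := hy
  obtain ⟨t, hts, ν, hν0, hind, hsumeq⟩ := cone_caratheodory s μ hμ0
  have htW : ↑t ⊆ WR := Set.Subset.trans (Finset.coe_subset.mpr hts) hsW
  -- cardinality bound
  have hcard : t.card ≤ n + d := by
    have h1 := hind.finset_card_le_finrank
    have h2 : Module.finrank ℝ ((Fin n → ℝ) × (Fin d → ℝ)) = n + d := by
      simp [Module.finrank_prod]
    rwa [h2] at h1
  -- the integral cone point
  set z : (Fin n → ℝ) × (Fin d → ℝ) := ∑ w ∈ t, ((⌊ν w⌋ : ℤ) : ℝ) • w with hz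
  have hzcone : z ∈ coneHull WR :=
    ⟨t, fun w => ((⌊ν w⌋ : ℤ) : ℝ), htW,
      fun w hw => by simpa using Int.floor_nonneg.mpr (hν0 w hw), rfl⟩
  have hzint : (∀ i, ∃ k : ℤ, z.1 i = (k : ℝ)) ∧ (∀ j, ∃ k : ℤ, z.2 j = (k : ℝ)) := by
    rw [hz]
    refine Finset.sum_induction (fun w => ((⌊ν w⌋ : ℤ) : ℝ) • w)
      (fun q : (Fin n → ℝ) × (Fin d → ℝ) => (∀ i, ∃ k : ℤ, q.1 i = (k : ℝ)) ∧
        (∀ j, ∃ k : ℤ, q.2 j = (k : ℝ))) ?_ ?_ ?_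
    · rintro a b ⟨ha1, ha2⟩ ⟨hb1, hb2⟩
      constructor
      · intro i
        obtain ⟨k1, hk1⟩ := ha1 i; obtain ⟨k2, hk2⟩ := hb1 i
        exact ⟨k1 + k2, by simp [Prod.fst_add, hk1, hk2]⟩
      · intro j
        obtain ⟨k1, hk1⟩ := ha2 j; obtain ⟨k2, hk2⟩ := hb2 j
        exact ⟨k1 + k2, by simp [Prod.snd_add, hk1, hk2]⟩
    · exact ⟨fun i => ⟨0, by simp⟩, fun j => ⟨0, by simp⟩⟩
    · intro w hwt
      have hwWR : w ∈ WR := htW hwt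
      rw [hWR] at hwWR
      obtain ⟨w', -, hww⟩ := hwWR
      constructor
      · intro i
        refine ⟨⌊ν w⌋ * w'.1 i, ?_⟩
        rw [← hww]
        simp only [Prod.smul_fst, Pi.smul_apply, smul_eq_mul]
        push_cast; ring
      · intro j
        refine ⟨⌊ν w⌋ * w'.2 j, ?_⟩
        rw [← hww]
        simp only [Prod.smul_snd, Pi.smul_apply, smul_eq_mul]
        push_cast; ring
  -- fractional parts
  set fr : (Fin n → ℝ) × (Fin d → ℝ) → ℝ := fun w => ν w - ((⌊ν w⌋ : ℤ) : ℝ) with hfr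
  have hfr0 : ∀ w, 0 ≤ fr w := fun w => sub_nonneg.mpr (Int.floor_le _)
  have hfr1 : ∀ w, fr w ≤ 1 := fun w => by
    have := Int.lt_floor_add_one (ν w)
    simp only [hfr]; linarith
  have hxz : x - z = v + ∑ w ∈ t, fr w • w := by
    have hy' : y = ∑ w ∈ t, ν w • w := by rw [hyeq, hsumeq]
    rw [← hvy, hy', hz]
    rw [add_sub_assoc, ← Finset.sum_sub_distrib]
    have : ∀ w ∈ t, ν w • w - ((⌊ν w⌋ : ℤ) : ℝ) • w = fr w • w := fun w _ =>
      (sub_smul _ _ _).symm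
    rw [Finset.sum_congr rfl this]
  -- membership in the scaled hull
  have hmem2 : ∑ w ∈ t, fr w • w ∈ ((n + d : ℕ) : ℝ) • convexHull ℝ (WR ∪ {0}) := by
    set C := convexHull ℝ (WR ∪ {0}) with hC
    have hCc : Convex ℝ C := convex_convexHull ℝ _
    have h0C : (0 : (Fin n → ℝ) × (Fin d → ℝ)) ∈ C :=
      subset_convexHull ℝ _ (Or.inr rfl)
    have hwC : ∀ w ∈ t, w ∈ C := fun w hw => subset_convexHull ℝ _ (Or.inl (htW hw))
    by_cases hN : (n + d : ℕ) = 0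
    · have ht0 : t = ∅ := Finset.card_eq_zero.mp (Nat.le_zero.mp (hN ▸ hcard))
      rw [ht0, Finset.sum_empty]
      have := Set.smul_mem_smul_set (a := ((n + d : ℕ) : ℝ)) h0C
      rwa [smul_zero] at this
    · have hNpos : (0 : ℝ) < ((n + d : ℕ) : ℝ) :=
        Nat.cast_pos.mpr (Nat.pos_of_ne_zero hN)
      have hq : ∑ w ∈ t, (fr w / ((n + d : ℕ) : ℝ)) • w ∈ C := by
        apply convex_subsum_mem hCc h0C _ _
          (fun w _ => div_nonneg (hfr0 w) hNpos.le) ?_ hwC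
        rw [← Finset.sum_div, div_le_one hNpos]
        calc ∑ w ∈ t, fr w ≤ ∑ _w ∈ t, (1 : ℝ) :=
              Finset.sum_le_sum fun w _ => hfr1 w
          _ = t.card := by simp
          _ ≤ ((n + d : ℕ) : ℝ) := by exact_mod_cast hcard
      have heq : ∑ w ∈ t, fr w • w
          = ((n + d : ℕ) : ℝ) • ∑ w ∈ t, (fr w / ((n + d : ℕ) : ℝ)) • w := by
        rw [Finset.smul_sum]
        refine Finset.sum_congr rfl fun w _ => ?_
        rw [smul_smul, mul_div_cancel₀ _ hNpos.ne']
      rw [heq]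
      exact Set.smul_mem_smul_set hq
  refine ⟨z, hzcone, hzint.1, hzint.2, ?_, ?_⟩
  · rw [hT, hxz]
    exact Set.add_mem_add hv hmem2
  · rw [hMI]
    intro i
    obtain ⟨kx, hkx⟩ := hxMI i
    obtain ⟨kz, hkz⟩ := hzint.1 i
    exact ⟨kx - kz, by simp [Prod.fst_sub, hkx, hkz]⟩
end

section
/- Let P = {(x,y) ∈ ℝ^n × ℝ^d : A₁x + A₂y ≤ b} be a bounded polyhedron (polytope) with A₁ ∈ ℤ^(m×n), A₂ ∈ ℤ^(m×d), b ∈ ℤ^m. For a positive integer t, let P^t = {(x, t·y) : (x,y) ∈ P}. Then there exists a positive integer t such that conv(P^t ∩ ℤ^(n+d)) = conv(P^t ∩ (ℤ^n × ℝ^d)), and consequently the mixed-integer hull satisfies conv(P ∩ (ℤ^n × ℝ^d)) = {(x, y/t) : (x,y) ∈ conv(P^t ∩ ℤ^(n+d))}. -/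
open Matrix Set

lemma fiber_hull (d m : ℕ) (A : Matrix (Fin m) (Fin d) ℤ) (c : Fin m → ℤ)
    (t : ℕ) (ht0 : 0 < t)
    (ht : ∀ g : Fin d → Fin m, (A.submatrix g id).det ≠ 0 → (A.submatrix g id).det ∣ (t : ℤ))
    (Q : Set (Fin d → ℝ))
    (hQ : Q = {y | ∀ i, (∑ j, (A i j : ℝ) * y j) ≤ (c i : ℝ)})
    (hbdd : Bornology.IsBounded Q) :
    Q ⊆ convexHull ℝ {y ∈ Q | ∀ j, ∃ z : ℤ, (t : ℝ) * y j = (z : ℝ)} := by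
  have hconv : Convex ℝ Q := by
    rw [hQ]
    have : {y : Fin d → ℝ | ∀ i, (∑ j, (A i j : ℝ) * y j) ≤ (c i : ℝ)}
        = ⋂ i, {y : Fin d → ℝ | (∑ j, (A i j : ℝ) * y j) ≤ (c i : ℝ)} := by
      ext y; simp [Set.mem_iInter]
    rw [this]
    refine convex_iInter fun i => convex_halfSpace_le ?_ _
    constructor
    · intro x y; simp [mul_add, Finset.sum_add_distrib]
    · intro r x; simp [Finset.mul_sum, smul_eq_mul]; ring_nf
      exact Finset.sum_congr rfl fun j _ => by ring
  have hclosed : IsClosed Q := by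
    rw [hQ]
    have : {y : Fin d → ℝ | ∀ i, (∑ j, (A i j : ℝ) * y j) ≤ (c i : ℝ)}
        = ⋂ i, (fun y : Fin d → ℝ => ∑ j, (A i j : ℝ) * y j) ⁻¹' Set.Iic (c i : ℝ) := by
      ext y; simp [Set.mem_iInter, Set.mem_preimage]
    rw [this]
    exact isClosed_iInter fun i => IsClosed.preimage
      (by exact continuous_finset_sum _ fun j _ => (continuous_const.mul (continuous_apply j)))
      isClosed_Iic
  have hcomp : IsCompact Q := Metric.isCompact_iff_isClosed_bounded.mpr ⟨hclosed, hbdd⟩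
  set L : Set (Fin d → ℝ) := {y ∈ Q | ∀ j, ∃ z : ℤ, (t : ℝ) * y j = (z : ℝ)} with hL
  -- L is finite
  have hLfin : L.Finite := by
    obtain ⟨C, hC⟩ := isBounded_iff_forall_norm_le.mp (by exact hbdd)
    set M : ℤ := ⌈(t : ℝ) * C⌉
    have hsub : L ⊆ (fun z : Fin d → ℤ => fun j => (z j : ℝ) / (t : ℝ)) ''
        (Set.pi Set.univ fun _ : Fin d => Set.Icc (-M) M) := by
      rintro y ⟨hyQ, hy⟩
      choose z hz using hy
      refine ⟨z, ?_, ?_⟩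
      · intro j _
        have h1 : |(z j : ℝ)| ≤ (t : ℝ) * C := by
          rw [← hz j, abs_mul, abs_of_nonneg (by positivity : (0:ℝ) ≤ (t:ℝ))]
          have := norm_le_pi_norm y j
          have hyC := hC y hyQ
          have : |y j| ≤ C := le_trans (by simpa using norm_le_pi_norm y j) hyC
          have htpos : (0:ℝ) < (t:ℝ) := by positivity
          nlinarith
        have h2 : |(z j : ℝ)| ≤ (M : ℝ) := le_trans h1 (Int.le_ceil _)
        have := abs_le.mp h2
        constructor
        · exact_mod_cast this.1
        · exact_mod_cast this.2
      · funext j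
        have htne : (t : ℝ) ≠ 0 := by positivity
        field_simp
        rw [← hz j]
    exact Set.Finite.subset (Set.Finite.image _ (Set.Finite.pi fun _ => Set.finite_Icc _ _)) hsub
  -- extreme points are in L
  have hext : Q.extremePoints ℝ ⊆ L := by
    rintro y hy
    obtain ⟨hyQ, hyext⟩ := mem_extremePoints.mp hy
    refine ⟨hyQ, ?_⟩
    -- tight set
    set rows : Fin m → (Fin d → ℝ) := fun i j => (A i j : ℝ) with hrows
    set T : Set (Fin m) := {i | ∑ j, (A i j : ℝ) * y j = (c i : ℝ)} with hT
    have hspan : Submodule.span ℝ (rows '' T) = ⊤ := by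
      by_contra hne
      obtain ⟨f, hf0, hfbot⟩ := Submodule.exists_dual_map_eq_bot_of_lt_top
        (lt_top_iff_ne_top.mpr hne) inferInstance
      set v : Fin d → ℝ := fun j => f (Pi.single j 1) with hv
      have hfv : ∀ x : Fin d → ℝ, f x = ∑ j, x j * v j := by
        intro x
        conv_lhs => rw [pi_eq_sum_univ x, map_sum]
        refine Finset.sum_congr rfl fun j _ => ?_
        rw [f.map_smul, smul_eq_mul]
        have heq : (fun j_1 => if j = j_1 then (1:ℝ) else 0) = Pi.single j 1 := by
          funext k; simp [Pi.single_apply, eq_comm]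
        rw [heq, hv]
      have hv0 : v ≠ 0 := by
        intro h
        apply hf0
        refine LinearMap.ext fun x => ?_
        rw [hfv x, h]
        simp
      have hvT : ∀ i ∈ T, ∑ j, (A i j : ℝ) * v j = 0 := by
        intro i hi
        have hmem : rows i ∈ Submodule.span ℝ (rows '' T) :=
          Submodule.subset_span ⟨i, hi, rfl⟩
        have : f (rows i) ∈ Submodule.map f (Submodule.span ℝ (rows '' T)) :=
          Submodule.mem_map_of_mem hmem
        rw [hfbot, Submodule.mem_bot] at this
        rw [hfv] at this
        simpa [hrows] using this
      -- wiggle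
      set w : Fin m → ℝ := fun i => ∑ j, (A i j : ℝ) * v j with hw
      have hslack : ∀ i, w i ≠ 0 → 0 < (c i : ℝ) - ∑ j, (A i j : ℝ) * y j := by
        intro i hwi
        have hi : i ∉ T := fun hiT => hwi (hvT i hiT)
        have hle := hQ ▸ hyQ
        have hle' : ∑ j, (A i j : ℝ) * y j ≤ (c i : ℝ) := by
          rw [hQ] at hyQ; exact hyQ i
        rcases lt_or_eq_of_le hle' with h | h
        · linarith
        · exact absurd h hi
      set S : Finset ℝ := insert (1 : ℝ)
        ((Finset.univ.filter fun i => w i ≠ 0).image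
          fun i => ((c i : ℝ) - ∑ j, (A i j : ℝ) * y j) / |w i|) with hS
      have hSne : S.Nonempty := ⟨1, Finset.mem_insert_self _ _⟩
      set ε : ℝ := S.min' hSne with hε
      have hε0 : 0 < ε := by
        rw [hε, Finset.lt_min'_iff]
        intro x hx
        rcases Finset.mem_insert.mp hx with h | h
        · simp [h]
        · obtain ⟨i, hi, rfl⟩ := Finset.mem_image.mp h
          have hwi : w i ≠ 0 := (Finset.mem_filter.mp hi).2
          exact div_pos (hslack i hwi) (abs_pos.mpr hwi)
      have hεle : ∀ i, w i ≠ 0 → ε * |w i| ≤ (c i : ℝ) - ∑ j, (A i j : ℝ) * y j := by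
        intro i hwi
        have hmem : ((c i : ℝ) - ∑ j, (A i j : ℝ) * y j) / |w i| ∈ S :=
          Finset.mem_insert_of_mem (Finset.mem_image.mpr ⟨i, Finset.mem_filter.mpr
            ⟨Finset.mem_univ i, hwi⟩, rfl⟩)
        have := Finset.min'_le S _ hmem
        rw [← hε] at this
        rw [le_div_iff₀ (abs_pos.mpr hwi)] at this
        linarith
      have hmemQ : ∀ s : ℝ, |s| ≤ ε → y + s • v ∈ Q := by
        intro s hs
        rw [hQ]
        intro i
        have hexp : ∑ j, (A i j : ℝ) * (y + s • v) j
            = (∑ j, (A i j : ℝ) * y j) + s * w i := by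
          rw [hw, Finset.mul_sum]
          rw [← Finset.sum_add_distrib]
          exact Finset.sum_congr rfl fun j _ => by simp [smul_eq_mul]; ring
        rw [hexp]
        by_cases hwi : w i = 0
        · rw [hQ] at hyQ
          simpa [hwi] using hyQ i
        · have h1 : s * w i ≤ |s| * |w i| := le_trans (le_abs_self _) (by rw [abs_mul])
          have h2 : |s| * |w i| ≤ ε * |w i| :=
            mul_le_mul_of_nonneg_right hs (abs_nonneg _)
          have := hεle i hwi
          linarith
      have h1 : y + ε • v ∈ Q := hmemQ ε (by rw [abs_of_pos hε0])
      have h2 : y + (-ε) • v ∈ Q := hmemQ (-ε) (by rw [abs_neg, abs_of_pos hε0])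
      have hseg : y ∈ openSegment ℝ (y + ε • v) (y + (-ε) • v) := by
        refine ⟨1/2, 1/2, by norm_num, by norm_num, by norm_num, ?_⟩
        ext j
        simp [smul_eq_mul]
        ring
      have := hyext _ h1 _ h2 hseg
      have hε' : ε • v = 0 := by
        have := this.1
        have : y + ε • v - y = 0 := by rw [this]; simp
        simpa using this
      exact hv0 (by
        have := smul_eq_zero.mp hε'
        rcases this with h | h
        · exact absurd h (ne_of_gt hε0)
        · exact h)
    -- extract basis
    obtain ⟨bS, hbsub, hbspan, hbind⟩ := exists_linearIndependent ℝ (rows '' T)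
    rw [hspan] at hbspan
    have hbfin : bS.Finite := hbind.setFinite
    have hbfintype : Fintype bS := hbfin.fintype
    have hbasis : Module.Basis bS ℝ (Fin d → ℝ) := Module.Basis.mk hbind (by rw [← hbspan]; exact le_of_eq (by rw [Subtype.range_coe]))
    have hcard : Fintype.card bS = d := by
      have h1 := Module.finrank_eq_card_basis hbasis
      rw [Module.finrank_fin_fun ℝ] at h1
      exact h1.symm
    -- choose rows forming an invertible matrix
    have e : Fin d ≃ bS := (Fintype.equivFinOfCardEq hcard).symm
    have hchoice : ∀ k : Fin d, ∃ i : Fin m, i ∈ T ∧ rows i = ((e k : bS) : Fin d → ℝ) := by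
      intro k
      obtain ⟨i, hi, hri⟩ := hbsub (e k).2
      exact ⟨i, hi, hri⟩
    choose g hgT hgrows using hchoice
    set M : Matrix (Fin d) (Fin d) ℤ := A.submatrix g id with hM
    set Mr : Matrix (Fin d) (Fin d) ℝ := (Int.castRingHom ℝ).mapMatrix M with hMr
    have hMrk : ∀ k j, Mr k j = (A (g k) j : ℝ) := fun k j => rfl
    have hMrrows : (fun k => Mr k) = fun k => (((e k : bS)) : Fin d → ℝ) := by
      funext k
      rw [← hgrows k]
      rfl
    have hli : LinearIndependent ℝ (fun k => Mr k) := by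
      rw [hMrrows]
      exact hbind.comp e e.injective
    have hunit : IsUnit Mr := Matrix.linearIndependent_rows_iff_isUnit.mp hli
    have hdetr : Mr.det ≠ 0 := by
      have := (Matrix.isUnit_iff_isUnit_det Mr).mp hunit
      exact IsUnit.ne_zero this
    have hdetM : ((M.det : ℤ) : ℝ) = Mr.det := by
      rw [hMr]
      exact RingHom.map_det (Int.castRingHom ℝ) M
    have hdetMne : M.det ≠ 0 := by
      intro h
      rw [h] at hdetM
      simp at hdetM
      exact hdetr hdetM.symm
    -- linear system
    have hMy : Mr *ᵥ y = fun k => (c (g k) : ℝ) := by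
      funext k
      have := hgT k
      rw [hT] at this
      simpa [Matrix.mulVec, dotProduct, hMrk] using this
    have h2 : Mr.det • y = (Matrix.adjugate Mr) *ᵥ (fun k => (c (g k) : ℝ)) := by
      rw [← hMy, Matrix.mulVec_mulVec, Matrix.adjugate_mul, Matrix.smul_mulVec,
        Matrix.one_mulVec]
    set w : Fin d → ℤ := Matrix.adjugate M *ᵥ (fun k => c (g k)) with hwdef
    have hadj : Matrix.adjugate Mr = (Int.castRingHom ℝ).mapMatrix (Matrix.adjugate M) := by
      rw [hMr, RingHom.map_adjugate]
    have hdet_y : ∀ j, ((M.det : ℤ) : ℝ) * y j = ((w j : ℤ) : ℝ) := by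
      intro j
      have := congrFun h2 j
      rw [Pi.smul_apply, smul_eq_mul] at this
      rw [hdetM, this, hadj, hwdef]
      simp [Matrix.mulVec, dotProduct, RingHom.mapMatrix_apply, Matrix.map_apply]
    obtain ⟨K, hK⟩ := ht g hdetMne
    intro j
    refine ⟨K * w j, ?_⟩
    have hKr : (t : ℝ) = ((M.det : ℤ) : ℝ) * (K : ℝ) := by exact_mod_cast hK
    rw [hKr]
    rw [Int.cast_mul]
    rw [mul_comm ((M.det : ℤ) : ℝ) (K : ℝ), mul_assoc, hdet_y j]
  calc Q = closure (convexHull ℝ (Q.extremePoints ℝ)) :=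
        (closure_convexHull_extremePoints hcomp hconv).symm
    _ ⊆ closure (convexHull ℝ L) := closure_mono (convexHull_mono hext)
    _ = convexHull ℝ L := ((hLfin.isCompact_convexHull (𝕜 := ℝ)).isClosed).closure_eq

theorem scaling_reduces_mixed_integer_hull_to_integer_hull (n d m : ℕ)
    (A₁ : Matrix (Fin m) (Fin n) ℤ) (A₂ : Matrix (Fin m) (Fin d) ℤ) (b : Fin m → ℤ)
    (P : Set ((Fin n → ℝ) × (Fin d → ℝ)))
    (hP : P = {p | ∀ i, (∑ j, (A₁ i j : ℝ) * p.1 j) + (∑ j, (A₂ i j : ℝ) * p.2 j) ≤ (b i : ℝ)})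
    (hbdd : Bornology.IsBounded P)
    (MI allInt : Set ((Fin n → ℝ) × (Fin d → ℝ)))
    (hMI : MI = {p | ∀ i, ∃ z : ℤ, p.1 i = (z : ℝ)})
    (hallInt : allInt = {p | (∀ i, ∃ z : ℤ, p.1 i = (z : ℝ)) ∧ (∀ j, ∃ z : ℤ, p.2 j = (z : ℝ))}) :
    ∃ t : ℕ, 0 < t ∧
      (convexHull ℝ (((fun p : (Fin n → ℝ) × (Fin d → ℝ) =>
          (p.1, fun j => (t : ℝ) * p.2 j)) '' P) ∩ allInt)
        = convexHull ℝ (((fun p : (Fin n → ℝ) × (Fin d → ℝ) =>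
          (p.1, fun j => (t : ℝ) * p.2 j)) '' P) ∩ MI)) ∧
      (convexHull ℝ (P ∩ MI)
        = (fun p : (Fin n → ℝ) × (Fin d → ℝ) => (p.1, fun j => p.2 j / (t : ℝ))) ''
            convexHull ℝ (((fun p : (Fin n → ℝ) × (Fin d → ℝ) =>
              (p.1, fun j => (t : ℝ) * p.2 j)) '' P) ∩ allInt)) := by
  classical
  set t : ℕ := ∏ g : Fin d → Fin m,
      (if (A₂.submatrix g id).det = 0 then 1 else (A₂.submatrix g id).det.natAbs) with htdef
  have ht0 : 0 < t := Finset.prod_pos fun g _ => by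
    split_ifs with h
    · exact one_pos
    · exact Int.natAbs_pos.mpr h
  have htdvd : ∀ g : Fin d → Fin m, (A₂.submatrix g id).det ≠ 0 →
      (A₂.submatrix g id).det ∣ (t : ℤ) := by
    intro g hg
    have h1 : (if (A₂.submatrix g id).det = 0 then 1 else (A₂.submatrix g id).det.natAbs) ∣ t :=
      Finset.dvd_prod_of_mem _ (Finset.mem_univ g)
    rw [if_neg hg] at h1
    exact Int.natAbs_dvd.mp (Int.natCast_dvd_natCast.mpr h1)
  have htne : (t : ℝ) ≠ 0 := by positivity
  refine ⟨t, ht0, ?_⟩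
  set scale : ((Fin n → ℝ) × (Fin d → ℝ)) → ((Fin n → ℝ) × (Fin d → ℝ)) :=
    fun p => (p.1, fun j => (t : ℝ) * p.2 j) with hscale
  set divt : ((Fin n → ℝ) × (Fin d → ℝ)) → ((Fin n → ℝ) × (Fin d → ℝ)) :=
    fun p => (p.1, fun j => p.2 j / (t : ℝ)) with hdivt
  -- the key inclusion
  have hkey : (scale '' P) ∩ MI ⊆ convexHull ℝ ((scale '' P) ∩ allInt) := by
    rintro q ⟨⟨p, hpP, rfl⟩, hqMI⟩
    obtain ⟨x, y⟩ := p
    rw [hMI] at hqMI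
    have hxint : ∀ i, ∃ z : ℤ, x i = (z : ℝ) := hqMI
    choose zx hzx using hxint
    set c' : Fin m → ℤ := fun i => b i - ∑ j, A₁ i j * zx j with hc'
    set Q : Set (Fin d → ℝ) := {y' | ∀ i, (∑ j, (A₂ i j : ℝ) * y' j) ≤ (c' i : ℝ)} with hQdef
    have hxsum : ∀ i, (∑ j, (A₁ i j : ℝ) * x j) = ((∑ j, A₁ i j * zx j : ℤ) : ℝ) := by
      intro i
      push_cast
      exact Finset.sum_congr rfl fun j _ => by rw [hzx j]
    have hfiber : ∀ y' : Fin d → ℝ, y' ∈ Q ↔ (x, y') ∈ P := by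
      intro y'
      rw [hQdef, hP]
      simp only [Set.mem_setOf_eq]
      constructor
      · intro h i
        have h1 := h i
        rw [hc'] at h1
        push_cast at h1
        have h2 := hxsum i
        push_cast at h2
        linarith
      · intro h i
        have h1 := h i
        rw [hc']
        push_cast
        have h2 := hxsum i
        push_cast at h2
        linarith
    have hyQ : y ∈ Q := (hfiber y).mpr hpP
    have hQbdd : Bornology.IsBounded Q := by
      obtain ⟨C, hC⟩ := isBounded_iff_forall_norm_le.mp (show Bornology.IsBounded P from hbdd)
      refine isBounded_iff_forall_norm_le.mpr ⟨C, fun y' hy' => ?_⟩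
      exact le_trans (by simpa using norm_snd_le (x, y')) (hC _ ((hfiber y').mp hy'))
    have hsub := fiber_hull d m A₂ c' t ht0 htdvd Q hQdef hQbdd hyQ
    -- affine map sending y' to (x, t • y')
    set Flin : (Fin d → ℝ) →ₗ[ℝ] ((Fin n → ℝ) × (Fin d → ℝ)) :=
      { toFun := fun v => (0, fun j => (t : ℝ) * v j)
        map_add' := fun v w => by
          refine Prod.ext (by simp) ?_
          funext j
          simp [mul_add]
        map_smul' := fun r v => by
          refine Prod.ext (by simp) ?_
          funext j
          simp [smul_eq_mul]
          ring } with hFlin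
    set F : (Fin d → ℝ) →ᵃ[ℝ] ((Fin n → ℝ) × (Fin d → ℝ)) :=
      { toFun := fun y' => (x, fun j => (t : ℝ) * y' j)
        linear := Flin
        map_vadd' := fun p v => by
          refine Prod.ext (by simp [hFlin]) ?_
          funext j
          simp [hFlin, mul_add] } with hF
    have himg : F y ∈ F '' (convexHull ℝ {y' ∈ Q | ∀ j, ∃ z : ℤ, (t : ℝ) * y' j = (z : ℝ)}) :=
      Set.mem_image_of_mem F hsub
    rw [AffineMap.image_convexHull] at himg
    have hFL : F '' {y' ∈ Q | ∀ j, ∃ z : ℤ, (t : ℝ) * y' j = (z : ℝ)}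
        ⊆ (scale '' P) ∩ allInt := by
      rintro _ ⟨w, ⟨hwQ, hwint⟩, rfl⟩
      refine ⟨⟨(x, w), (hfiber w).mp hwQ, rfl⟩, ?_⟩
      rw [hallInt]
      exact ⟨fun i => ⟨zx i, hzx i⟩, fun j => hwint j⟩
    exact convexHull_mono hFL himg
  have hAM : allInt ⊆ MI := by
    rw [hallInt, hMI]
    rintro p ⟨h1, _⟩
    exact h1
  have heq1 : convexHull ℝ ((scale '' P) ∩ allInt) = convexHull ℝ ((scale '' P) ∩ MI) := by
    refine le_antisymm (convexHull_mono (Set.inter_subset_inter_right _ hAM)) ?_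
    exact convexHull_min hkey (convex_convexHull ℝ _)
  refine ⟨heq1, ?_⟩
  have hlin_scale : IsLinearMap ℝ scale := by
    constructor
    · intro p q
      refine Prod.ext rfl ?_
      funext j
      simp [hscale, mul_add]
    · intro r p
      refine Prod.ext rfl ?_
      funext j
      simp [hscale, smul_eq_mul]
      ring
  have hMIs : (scale '' P) ∩ MI = scale '' (P ∩ MI) := by
    ext q
    constructor
    · rintro ⟨⟨p, hp, rfl⟩, hq⟩
      rw [hMI] at hq
      exact ⟨p, ⟨hp, by rw [hMI]; exact hq⟩, rfl⟩
    · rintro ⟨p, ⟨hp, hpMI⟩, rfl⟩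
      rw [hMI] at hpMI
      exact ⟨⟨p, hp, rfl⟩, by rw [hMI]; exact hpMI⟩
  have hcomp : divt ∘ scale = id := by
    funext p
    refine Prod.ext rfl ?_
    funext j
    simp [hdivt, hscale]
    exact mul_div_cancel_left₀ _ htne
  have hds : ∀ s : Set ((Fin n → ℝ) × (Fin d → ℝ)), divt '' (scale '' s) = s := by
    intro s
    rw [← Set.image_comp, hcomp, Set.image_id]
  calc convexHull ℝ (P ∩ MI)
      = divt '' (scale '' (convexHull ℝ (P ∩ MI))) := (hds _).symm
    _ = divt '' (convexHull ℝ (scale '' (P ∩ MI))) := by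
        rw [hlin_scale.image_convexHull]
    _ = divt '' (convexHull ℝ ((scale '' P) ∩ MI)) := by rw [hMIs]
    _ = divt '' (convexHull ℝ ((scale '' P) ∩ allInt)) := by rw [heq1]
end

section
/- Let P = {(x,y) ∈ ℝ^n × ℝ^d : A₁x + A₂y ≤ b} be a bounded polyhedron with A₁ ∈ ℤ^(m×n), A₂ ∈ ℤ^(m×d), b ∈ ℤ^m. Let M be the (m+2n) × (n+d) integer matrix whose rows are the rows of (A₁ A₂) together with the rows (e_i, 0) and (−e_i, 0) for i = 1,…,n (e_i the i-th standard unit vector of ℝ^n). Let t be the product of the absolute values of the determinants of all invertible (n+d) × (n+d) submatrices of M formed by choosing n+d of its rows (and t = 1 if there are none). Then t is a positive integer and for every x̂ ∈ ℤ^n and every extreme point (x̂, ŷ) of the fiber P_{x̂} = {(x,y) ∈ P : x = x̂}, the vector t·ŷ belongs to ℤ^d. -/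
/-- The `(m+2n) × (n+d)` integer matrix whose rows are the rows of `(A₁ A₂)` together with
the rows `(eᵢ, 0)` and `(-eᵢ, 0)` for `i = 1, …, n`. -/
def augmentedMatrix (n d m : ℕ) (A₁ : Matrix (Fin m) (Fin n) ℤ)
    (A₂ : Matrix (Fin m) (Fin d) ℤ) : Matrix (Fin (m + 2 * n)) (Fin (n + d)) ℤ :=
  fun i j =>
    if hi : (i : ℕ) < m then
      if hj : (j : ℕ) < n then A₁ ⟨i, hi⟩ ⟨j, hj⟩
      else A₂ ⟨i, hi⟩ ⟨(j : ℕ) - n, by have := j.isLt; omega⟩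
    else if (i : ℕ) < m + n then
      if (j : ℕ) < n then (if (i : ℕ) - m = (j : ℕ) then 1 else 0) else 0
    else
      if (j : ℕ) < n then (if (i : ℕ) - m - n = (j : ℕ) then -1 else 0) else 0

open Matrix

private lemma extreme_perturb {E : Type*} [AddCommGroup E] [Module ℝ E] {Q : Set E} {z v : E}
    {ε : ℝ} (hz : z ∈ Set.extremePoints ℝ Q) (hε : 0 < ε)
    (h₁ : z + ε • v ∈ Q) (h₂ : z - ε • v ∈ Q) : v = 0 := by
  have hmem : z ∈ openSegment ℝ (z - ε • v) (z + ε • v) :=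
    ⟨1/2, 1/2, by norm_num, by norm_num, by norm_num, by module⟩
  have h := (hz.2 h₂ h₁ hmem)
  have h' : ε • v = 0 := by
    have := congrArg (· - z) h
    simpa using this
  exact (smul_eq_zero.mp h').resolve_left (ne_of_gt hε)

private lemma exists_perp_of_span_ne_top {N : ℕ} {T : Set (Fin N → ℝ)}
    (h : Submodule.span ℝ T ≠ ⊤) :
    ∃ v : Fin N → ℝ, v ≠ 0 ∧ ∀ u ∈ T, u ⬝ᵥ v = 0 := by
  obtain ⟨φ, hφ0, hφ⟩ := Submodule.exists_dual_map_eq_bot_of_lt_top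
    (lt_top_iff_ne_top.2 h) inferInstance
  have key : ∀ u : Fin N → ℝ, u ⬝ᵥ (fun j => φ (Pi.single j 1)) = φ u := by
    intro u
    rw [dotProduct]
    rw [LinearMap.pi_apply_eq_sum_univ φ u]
    refine Finset.sum_congr rfl fun j _ => ?_
    rw [smul_eq_mul]
    refine congrArg (u j * ·) (congrArg φ ?_)
    ext k
    simp [Pi.single_apply, eq_comm]
  refine ⟨fun j => φ (Pi.single j 1), ?_, ?_⟩
  · intro hv
    apply hφ0
    refine LinearMap.ext fun u => ?_
    rw [← key u, hv]
    simp
  · intro u hu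
    rw [key u]
    have : φ u ∈ (Submodule.span ℝ T).map φ := ⟨u, Submodule.subset_span hu, rfl⟩
    rw [hφ] at this
    simpa using this

private lemma dot_row_lt (n d m : ℕ) (A₁ : Matrix (Fin m) (Fin n) ℤ)
    (A₂ : Matrix (Fin m) (Fin d) ℤ) (u : Fin (n+d) → ℝ) (i : Fin (m + 2*n)) (hi : (i:ℕ) < m) :
    (fun j => ((augmentedMatrix n d m A₁ A₂) i j : ℝ)) ⬝ᵥ u =
      (∑ j, (A₁ ⟨i,hi⟩ j : ℝ) * u (Fin.castAdd d j))
        + ∑ j, (A₂ ⟨i,hi⟩ j : ℝ) * u (Fin.natAdd n j) := by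
  rw [dotProduct, Fin.sum_univ_add]
  congr 1
  · refine Finset.sum_congr rfl fun j _ => ?_
    have hj : ((Fin.castAdd d j : Fin (n+d)) : ℕ) < n := by simpa using j.isLt
    simp only [augmentedMatrix, dif_pos hi, dif_pos hj]
    have h2 : (⟨((Fin.castAdd d j : Fin (n+d)) : ℕ), hj⟩ : Fin n) = j := by ext; simp
    rw [h2]
  · refine Finset.sum_congr rfl fun j _ => ?_
    have hj : ¬ ((Fin.natAdd n j : Fin (n+d)) : ℕ) < n := by simp
    simp only [augmentedMatrix, dif_pos hi, dif_neg hj]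
    have h2 : (⟨((Fin.natAdd n j : Fin (n+d)) : ℕ) - n, by have := (Fin.natAdd n j).isLt; omega⟩ : Fin d) = j := by
      ext; simp
    rw [h2]

private lemma dot_row_e (n d m : ℕ) (A₁ : Matrix (Fin m) (Fin n) ℤ)
    (A₂ : Matrix (Fin m) (Fin d) ℤ) (u : Fin (n+d) → ℝ) (i : Fin (m + 2*n))
    (hi : m ≤ (i:ℕ)) (hi2 : (i:ℕ) < m + n) :
    (fun j => ((augmentedMatrix n d m A₁ A₂) i j : ℝ)) ⬝ᵥ u
      = u ⟨(i:ℕ) - m, by omega⟩ := by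
  rw [dotProduct]
  rw [Finset.sum_eq_single (⟨(i:ℕ) - m, by omega⟩ : Fin (n+d))]
  · simp only [augmentedMatrix, dif_neg (Nat.not_lt.2 hi), if_pos hi2]
    rw [if_pos (by show (i:ℕ) - m < n; omega)]
    norm_num
  · intro j _ hj
    simp only [augmentedMatrix, dif_neg (Nat.not_lt.2 hi), if_pos hi2]
    rcases lt_or_ge (j:ℕ) n with h | h
    · rw [if_pos h, if_neg, Int.cast_zero, zero_mul]
      intro hc
      exact hj (by ext; simp [← hc])
    · rw [if_neg (Nat.not_lt.2 h), Int.cast_zero, zero_mul]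
  · simp

private lemma dot_row_nege (n d m : ℕ) (A₁ : Matrix (Fin m) (Fin n) ℤ)
    (A₂ : Matrix (Fin m) (Fin d) ℤ) (u : Fin (n+d) → ℝ) (i : Fin (m + 2*n))
    (hi : m + n ≤ (i:ℕ)) :
    (fun j => ((augmentedMatrix n d m A₁ A₂) i j : ℝ)) ⬝ᵥ u
      = - u ⟨(i:ℕ) - m - n, by have := i.isLt; omega⟩ := by
  rw [dotProduct]
  rw [Finset.sum_eq_single (⟨(i:ℕ) - m - n, by have := i.isLt; omega⟩ : Fin (n+d))]
  · simp only [augmentedMatrix, dif_neg (by omega : ¬ (i:ℕ) < m),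
      if_neg (Nat.not_lt.2 hi)]
    rw [if_pos (by show (i:ℕ) - m - n < n; have := i.isLt; omega)]
    norm_num
  · intro j _ hj
    simp only [augmentedMatrix, dif_neg (by omega : ¬ (i:ℕ) < m), if_neg (Nat.not_lt.2 hi)]
    rcases lt_or_ge (j:ℕ) n with h | h
    · rw [if_pos h, if_neg, Int.cast_zero, zero_mul]
      intro hc
      exact hj (by ext; simp [← hc])
    · rw [if_neg (Nat.not_lt.2 h), Int.cast_zero, zero_mul]
  · simp

private def glueVec (n d : ℕ) (xhat : Fin n → ℤ) (q : Fin d → ℝ) : Fin (n+d) → ℝ :=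
  fun jj => if h : (jj:ℕ) < n then (xhat ⟨jj, h⟩ : ℝ)
    else q ⟨(jj:ℕ) - n, by have := jj.isLt; omega⟩

private def rhsVec (n m : ℕ) (b : Fin m → ℤ) (xhat : Fin n → ℤ) : Fin (m+2*n) → ℤ :=
  fun i =>
    if h : (i:ℕ) < m then b ⟨i, h⟩
    else if h2 : (i:ℕ) < m + n then xhat ⟨(i:ℕ) - m, by omega⟩
    else -xhat ⟨(i:ℕ) - m - n, by have := i.isLt; omega⟩

private lemma glue_castAdd (n d : ℕ) (xhat : Fin n → ℤ) (q : Fin d → ℝ) (j : Fin n) :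
    glueVec n d xhat q (Fin.castAdd d j) = (xhat j : ℝ) := by
  have hj : ((Fin.castAdd d j : Fin (n+d)) : ℕ) < n := by simpa using j.isLt
  rw [glueVec, dif_pos hj]
  have h2 : (⟨((Fin.castAdd d j : Fin (n+d)) : ℕ), hj⟩ : Fin n) = j := by ext; simp
  rw [h2]

private lemma glue_natAdd (n d : ℕ) (xhat : Fin n → ℤ) (q : Fin d → ℝ) (j : Fin d) :
    glueVec n d xhat q (Fin.natAdd n j) = q j := by
  have hj : ¬ ((Fin.natAdd n j : Fin (n+d)) : ℕ) < n := by simp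
  rw [glueVec, dif_neg hj]
  have h2 : (⟨((Fin.natAdd n j : Fin (n+d)) : ℕ) - n, by have := (Fin.natAdd n j).isLt; omega⟩ : Fin d) = j := by ext; simp
  rw [h2]

private lemma mem_fiber_iff (n d m : ℕ) (A₁ : Matrix (Fin m) (Fin n) ℤ)
    (A₂ : Matrix (Fin m) (Fin d) ℤ) (b : Fin m → ℤ) (xhat : Fin n → ℤ) (q : Fin d → ℝ) :
    (((fun i => ((xhat i : ℝ))), q) ∈
      {p ∈ {p : (Fin n → ℝ) × (Fin d → ℝ) |
          ∀ i, (∑ j, (A₁ i j : ℝ) * p.1 j) + (∑ j, (A₂ i j : ℝ) * p.2 j) ≤ (b i : ℝ)} |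
        p.1 = fun i => ((xhat i : ℝ))}) ↔
    ∀ i : Fin (m+2*n), (fun jj => ((augmentedMatrix n d m A₁ A₂) i jj : ℝ)) ⬝ᵥ
        glueVec n d xhat q ≤ (rhsVec n m b xhat i : ℝ) := by
  have hrow : ∀ (i : Fin (m+2*n)) (hi : (i:ℕ) < m),
      (fun jj => ((augmentedMatrix n d m A₁ A₂) i jj : ℝ)) ⬝ᵥ glueVec n d xhat q =
        (∑ j, (A₁ ⟨i, hi⟩ j : ℝ) * (xhat j : ℝ)) + ∑ j, (A₂ ⟨i, hi⟩ j : ℝ) * q j := by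
    intro i hi
    rw [dot_row_lt n d m A₁ A₂ _ i hi]
    congr 1
    · exact Finset.sum_congr rfl fun j _ => by rw [glue_castAdd]
    · exact Finset.sum_congr rfl fun j _ => by rw [glue_natAdd]
  constructor
  · rintro ⟨h1, -⟩ i
    rcases lt_or_ge (i:ℕ) m with hi | hi
    · rw [hrow i hi, rhsVec, dif_pos hi]
      exact h1 ⟨i, hi⟩
    · rcases lt_or_ge (i:ℕ) (m+n) with hi2 | hi2
      · rw [dot_row_e n d m A₁ A₂ _ i hi hi2, rhsVec, dif_neg (Nat.not_lt.2 hi), dif_pos hi2]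
        rw [glueVec, dif_pos (by show (i:ℕ) - m < n; omega)]
      · rw [dot_row_nege n d m A₁ A₂ _ i hi2, rhsVec, dif_neg (Nat.not_lt.2 hi),
          dif_neg (Nat.not_lt.2 hi2)]
        rw [glueVec, dif_pos (by show (i:ℕ) - m - n < n; have := i.isLt; omega)]
        push_cast
        exact le_rfl
  · intro h
    refine ⟨fun i => ?_, rfl⟩
    have hi : ((⟨(i:ℕ), by have := i.isLt; omega⟩ : Fin (m+2*n)) : ℕ) < m := i.isLt
    have := h ⟨(i:ℕ), by have := i.isLt; omega⟩
    rw [hrow _ hi, rhsVec, dif_pos hi] at this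
    simpa using this

private lemma span_active_rows (n d m : ℕ) (A₁ : Matrix (Fin m) (Fin n) ℤ)
    (A₂ : Matrix (Fin m) (Fin d) ℤ) (b : Fin m → ℤ) (xhat : Fin n → ℤ) (yhat : Fin d → ℝ)
    (hext : ((fun i => ((xhat i : ℝ))), yhat) ∈
      Set.extremePoints ℝ {p ∈ {p : (Fin n → ℝ) × (Fin d → ℝ) |
          ∀ i, (∑ j, (A₁ i j : ℝ) * p.1 j) + (∑ j, (A₂ i j : ℝ) * p.2 j) ≤ (b i : ℝ)} |
        p.1 = fun i => ((xhat i : ℝ))}) :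
    Submodule.span ℝ ((fun i : Fin (m+2*n) => fun jj => ((augmentedMatrix n d m A₁ A₂) i jj : ℝ)) ''
      {i | (fun jj => ((augmentedMatrix n d m A₁ A₂) i jj : ℝ)) ⬝ᵥ glueVec n d xhat yhat =
        (rhsVec n m b xhat i : ℝ)}) = ⊤ := by
  set r : Fin (m+2*n) → Fin (n+d) → ℝ :=
    fun i jj => ((augmentedMatrix n d m A₁ A₂) i jj : ℝ) with hrdef
  set z : Fin (n+d) → ℝ := glueVec n d xhat yhat with hzdef
  set T : Set (Fin (m+2*n)) := {i | r i ⬝ᵥ z = (rhsVec n m b xhat i : ℝ)} with hTdef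
  by_contra hne
  obtain ⟨v, hv0, hperp⟩ := exists_perp_of_span_ne_top hne
  have hperp' : ∀ i ∈ T, r i ⬝ᵥ v = 0 := fun i hi => hperp (r i) ⟨i, hi, rfl⟩
  -- all constraints hold at z
  have hzle : ∀ i, r i ⬝ᵥ z ≤ (rhsVec n m b xhat i : ℝ) :=
    (mem_fiber_iff n d m A₁ A₂ b xhat yhat).1 hext.1
  -- the e-rows are active
  have hact_e : ∀ (i : Fin (m+2*n)), m ≤ (i:ℕ) → i ∈ T := by
    intro i hi
    rcases lt_or_ge (i:ℕ) (m+n) with hi2 | hi2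
    · show r i ⬝ᵥ z = _
      rw [hrdef, dot_row_e n d m A₁ A₂ z i hi hi2, hzdef, glueVec,
        dif_pos (by show (i:ℕ) - m < n; omega), rhsVec, dif_neg (Nat.not_lt.2 hi), dif_pos hi2]
    · show r i ⬝ᵥ z = _
      rw [hrdef, dot_row_nege n d m A₁ A₂ z i hi2, hzdef, glueVec,
        dif_pos (by show (i:ℕ) - m - n < n; have := i.isLt; omega), rhsVec,
        dif_neg (by omega : ¬ (i:ℕ) < m), dif_neg (Nat.not_lt.2 hi2)]
      push_cast
      ring
  -- the x-part of v vanishes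
  have hvx : ∀ jj : Fin (n+d), (jj:ℕ) < n → v jj = 0 := by
    intro jj hjj
    have hlt : m + (jj:ℕ) < m + 2*n := by omega
    have h1 := hperp' ⟨m + jj, hlt⟩ (hact_e _ (by simp))
    rw [hrdef, dot_row_e n d m A₁ A₂ v ⟨m + jj, hlt⟩ (by simp) (by show m + (jj:ℕ) < m + n; omega)] at h1
    have : (⟨(((⟨m + (jj:ℕ), hlt⟩ : Fin (m+2*n)):ℕ)) - m, by show m + (jj:ℕ) - m < n + d; have := jj.isLt; omega⟩ : Fin (n+d)) = jj := by
      ext; simp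
    rwa [this] at h1
  -- perturbations stay in the set, eventually
  have hev : ∀ᶠ s in nhds (0:ℝ), ∀ i, r i ⬝ᵥ (z + s • v) ≤ (rhsVec n m b xhat i : ℝ) := by
    refine Filter.eventually_all.2 fun i => ?_
    have hsplit : ∀ s : ℝ, r i ⬝ᵥ (z + s • v) = r i ⬝ᵥ z + s * (r i ⬝ᵥ v) := by
      intro s
      rw [dotProduct_add, dotProduct_smul]
      rfl
    by_cases hiT : i ∈ T
    · refine Filter.Eventually.of_forall fun s => ?_
      rw [hsplit, hperp' i hiT, mul_zero, add_zero]
      exact hzle i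
    · have hlt : r i ⬝ᵥ z < (rhsVec n m b xhat i : ℝ) := lt_of_le_of_ne (hzle i) hiT
      have htend : Filter.Tendsto (fun s : ℝ => r i ⬝ᵥ z + s * (r i ⬝ᵥ v)) (nhds 0)
          (nhds (r i ⬝ᵥ z)) := by
        have : Filter.Tendsto (fun s : ℝ => r i ⬝ᵥ z + s * (r i ⬝ᵥ v)) (nhds 0)
            (nhds (r i ⬝ᵥ z + 0 * (r i ⬝ᵥ v))) := by
          exact (continuous_const.add (continuous_id.mul continuous_const)).tendsto 0
        simpa using this
      filter_upwards [htend.eventually_lt_const hlt] with s hs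
      rw [hsplit]
      exact le_of_lt hs
  have hevneg : ∀ᶠ s in nhds (0:ℝ), ∀ i,
      r i ⬝ᵥ (z + (-s) • v) ≤ (rhsVec n m b xhat i : ℝ) := by
    have hneg : Filter.Tendsto (fun s : ℝ => -s) (nhds 0) (nhds 0) := by
      simpa using (continuous_neg (G := ℝ)).tendsto 0
    exact hneg.eventually hev
  obtain ⟨δ, hδ, hball⟩ := Metric.eventually_nhds_iff.1 (hev.and hevneg)
  have hεδ : dist (δ/2) (0:ℝ) < δ := by
    rw [Real.dist_eq, sub_zero, abs_of_pos (by linarith)]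
    linarith
  obtain ⟨hp1, hp2⟩ := hball hεδ
  set ε := δ/2 with hεdef
  have hεpos : 0 < ε := by rw [hεdef]; linarith
  -- glue equality
  have hkey : ∀ s : ℝ, glueVec n d xhat (fun j => yhat j + s * v (Fin.natAdd n j))
      = z + s • v := by
    intro s
    funext jj
    show glueVec n d xhat _ jj = z jj + s * v jj
    by_cases hjj : (jj:ℕ) < n
    · rw [glueVec, dif_pos hjj, hzdef, glueVec, dif_pos hjj, hvx jj hjj, mul_zero, add_zero]
    · rw [glueVec, dif_neg hjj, hzdef, glueVec, dif_neg hjj]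
      have : Fin.natAdd n (⟨(jj:ℕ) - n, by have := jj.isLt; omega⟩ : Fin d) = jj := by
        ext; simp; omega
      rw [this]
  -- the two perturbed points
  have hmem1 : ((fun i => ((xhat i : ℝ))), fun j => yhat j + ε * v (Fin.natAdd n j)) ∈
      {p ∈ {p : (Fin n → ℝ) × (Fin d → ℝ) |
          ∀ i, (∑ j, (A₁ i j : ℝ) * p.1 j) + (∑ j, (A₂ i j : ℝ) * p.2 j) ≤ (b i : ℝ)} |
        p.1 = fun i => ((xhat i : ℝ))} := by
    refine (mem_fiber_iff n d m A₁ A₂ b xhat _).2 fun i => ?_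
    rw [hkey ε]
    exact hp1 i
  have hmem2 : ((fun i => ((xhat i : ℝ))), fun j => yhat j + (-ε) * v (Fin.natAdd n j)) ∈
      {p ∈ {p : (Fin n → ℝ) × (Fin d → ℝ) |
          ∀ i, (∑ j, (A₁ i j : ℝ) * p.1 j) + (∑ j, (A₂ i j : ℝ) * p.2 j) ≤ (b i : ℝ)} |
        p.1 = fun i => ((xhat i : ℝ))} := by
    refine (mem_fiber_iff n d m A₁ A₂ b xhat _).2 fun i => ?_
    rw [hkey (-ε)]
    exact hp2 i
  -- contradiction with extremality
  set w : (Fin n → ℝ) × (Fin d → ℝ) := (0, fun j => v (Fin.natAdd n j)) with hwdef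
  have hplus : ((fun i => ((xhat i : ℝ)) : Fin n → ℝ), fun j => yhat j + ε * v (Fin.natAdd n j))
      = ((fun i => ((xhat i : ℝ))), yhat) + ε • w := by
    rw [hwdef]
    refine Prod.ext ?_ ?_
    · simp
    · funext j
      simp
  have hminus : ((fun i => ((xhat i : ℝ)) : Fin n → ℝ), fun j => yhat j + (-ε) * v (Fin.natAdd n j))
      = ((fun i => ((xhat i : ℝ))), yhat) - ε • w := by
    rw [hwdef]
    refine Prod.ext ?_ ?_
    · simp
    · funext j
      simp
      ring
  rw [hplus] at hmem1
  rw [hminus] at hmem2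
  have hw0 : w = 0 := extreme_perturb hext hεpos hmem1 hmem2
  apply hv0
  funext jj
  by_cases hjj : (jj:ℕ) < n
  · exact hvx jj hjj
  · have h1 : Fin.natAdd n (⟨(jj:ℕ) - n, by have := jj.isLt; omega⟩ : Fin d) = jj := by
      ext; simp; omega
    have h2 := congrFun (congrArg Prod.snd hw0) ⟨(jj:ℕ) - n, by have := jj.isLt; omega⟩
    rw [hwdef] at h2
    simpa [h1] using h2

private lemma cramer_step (n d m : ℕ) (A₁ : Matrix (Fin m) (Fin n) ℤ)
    (A₂ : Matrix (Fin m) (Fin d) ℤ) (b : Fin m → ℤ) (xhat : Fin n → ℤ) (yhat : Fin d → ℝ)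
    (t : ℤ)
    (ht : t = ∏ S : Finset (Fin (m + 2 * n)),
      (if h : S.card = n + d then
        (if ((augmentedMatrix n d m A₁ A₂).submatrix (fun i => S.orderEmbOfFin h i) id).det = 0
          then 1
          else |((augmentedMatrix n d m A₁ A₂).submatrix (fun i => S.orderEmbOfFin h i) id).det|)
       else 1))
    (hspan : Submodule.span ℝ
      ((fun i : Fin (m+2*n) => fun jj => ((augmentedMatrix n d m A₁ A₂) i jj : ℝ)) ''
      {i | (fun jj => ((augmentedMatrix n d m A₁ A₂) i jj : ℝ)) ⬝ᵥ glueVec n d xhat yhat =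
        (rhsVec n m b xhat i : ℝ)}) = ⊤) :
    ∀ j, ∃ z : ℤ, (t : ℝ) * yhat j = (z : ℝ) := by
  intro j
  obtain ⟨bs, hbsub, hbspan, hbind⟩ := exists_linearIndependent ℝ
    ((fun i : Fin (m+2*n) => fun jj => ((augmentedMatrix n d m A₁ A₂) i jj : ℝ)) ''
      {i | (fun jj => ((augmentedMatrix n d m A₁ A₂) i jj : ℝ)) ⬝ᵥ glueVec n d xhat yhat =
        (rhsVec n m b xhat i : ℝ)})
  rw [hspan] at hbspan
  have hfin : bs.Finite := hbind.setFinite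
  haveI := hfin.fintype
  have hbase : Module.Basis bs ℝ (Fin (n+d) → ℝ) :=
    Module.Basis.mk hbind (by rw [Subtype.range_coe]; exact hbspan.ge)
  have hcardbs : Fintype.card bs = n + d := by
    have h1 := Module.finrank_eq_card_basis hbase
    rw [Module.finrank_pi ℝ, Fintype.card_fin] at h1
    exact h1.symm
  have hex : ∀ u : bs, ∃ i, i ∈ {i | (fun jj => ((augmentedMatrix n d m A₁ A₂) i jj : ℝ)) ⬝ᵥ
      glueVec n d xhat yhat = (rhsVec n m b xhat i : ℝ)} ∧
      (fun jj => ((augmentedMatrix n d m A₁ A₂) i jj : ℝ)) = (u : Fin (n+d) → ℝ) :=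
    fun u => hbsub u.2
  choose g hgT hgr using hex
  have ginj : Function.Injective g := by
    intro u u' h
    apply Subtype.ext
    rw [← hgr u, ← hgr u', h]
  set S : Finset (Fin (m+2*n)) := Finset.image g Finset.univ with hSdef
  have hScard : S.card = n + d := by
    rw [hSdef, Finset.card_image_of_injective _ ginj, Finset.card_univ, hcardbs]
  have hembS : ∀ i, (S.orderEmbOfFin hScard) i ∈ S := fun i => Finset.orderEmbOfFin_mem S hScard i
  have hσex : ∀ i, ∃ u : bs, g u = (S.orderEmbOfFin hScard) i := by
    intro i
    obtain ⟨u, _, hu⟩ := Finset.mem_image.1 (hembS i)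
    exact ⟨u, hu⟩
  choose σ hσg using hσex
  have hσinj : Function.Injective σ := by
    intro i i' h
    apply (S.orderEmbOfFin hScard).injective
    rw [← hσg i, ← hσg i', h]
  set B : Matrix (Fin (n+d)) (Fin (n+d)) ℝ :=
    ((augmentedMatrix n d m A₁ A₂).submatrix (fun i => S.orderEmbOfFin hScard i) id).map
      (Int.cast : ℤ → ℝ) with hBdef
  have hBrows : ∀ i, (fun jj => B i jj) = ((σ i : Fin (n+d) → ℝ)) := by
    intro i
    rw [← hgr (σ i), hσg i]
    rfl
  have hindB : LinearIndependent ℝ (fun i => B i) := by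
    have heq : (fun i => B i) = (Subtype.val ∘ σ) := by
      funext i
      exact hBrows i
    rw [heq]
    exact hbind.comp σ hσinj
  have hBdet : B.det ≠ 0 := by
    have h1 := Matrix.linearIndependent_rows_iff_isUnit.mp hindB
    have h2 := (Matrix.isUnit_iff_isUnit_det _).mp h1
    exact h2.ne_zero
  set D : ℤ := ((augmentedMatrix n d m A₁ A₂).submatrix
    (fun i => S.orderEmbOfFin hScard i) id).det with hDdef
  have hDcast : (D : ℝ) = B.det := RingHom.map_det (Int.castRingHom ℝ) _
  have hDne : D ≠ 0 := by
    intro h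
    apply hBdet
    rw [← hDcast, h, Int.cast_zero]
  -- Cramer's rule
  have hBz : B *ᵥ glueVec n d xhat yhat
      = fun i => (rhsVec n m b xhat ((S.orderEmbOfFin hScard) i) : ℝ) := by
    funext i
    show (fun jj => B i jj) ⬝ᵥ glueVec n d xhat yhat = _
    have hact := hgT (σ i)
    rw [hσg i] at hact
    exact hact
  have hAdj : B.det • glueVec n d xhat yhat = (Matrix.adjugate B) *ᵥ
      (fun i => (rhsVec n m b xhat ((S.orderEmbOfFin hScard) i) : ℝ)) := by
    rw [← hBz, Matrix.mulVec_mulVec, Matrix.adjugate_mul, Matrix.smul_mulVec,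
      Matrix.one_mulVec]
  set w : ℤ := ((Matrix.adjugate ((augmentedMatrix n d m A₁ A₂).submatrix
      (fun i => S.orderEmbOfFin hScard i) id)) *ᵥ
      (fun k => rhsVec n m b xhat ((S.orderEmbOfFin hScard) k))) (Fin.natAdd n j) with hwdef
  have hDy : (D : ℝ) * yhat j = (w : ℝ) := by
    have h1 := congrFun hAdj (Fin.natAdd n j)
    have hz : glueVec n d xhat yhat (Fin.natAdd n j) = yhat j := glue_natAdd n d xhat yhat j
    have hadjmap : Matrix.adjugate B = (Matrix.adjugate ((augmentedMatrix n d m A₁ A₂).submatrix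
        (fun i => S.orderEmbOfFin hScard i) id)).map (Int.cast : ℤ → ℝ) := by
      have h2 := RingHom.map_adjugate (Int.castRingHom ℝ)
        ((augmentedMatrix n d m A₁ A₂).submatrix (fun i => S.orderEmbOfFin hScard i) id)
      simp only [RingHom.mapMatrix_apply, Int.coe_castRingHom] at h2
      rw [hBdef]
      exact h2.symm
    rw [Pi.smul_apply, smul_eq_mul, hz, ← hDcast] at h1
    rw [h1, hadjmap, hwdef]
    simp only [Matrix.mulVec, dotProduct, Matrix.map_apply]
    push_cast
    rfl
  -- extract the factor |D| from t
  rw [← Finset.mul_prod_erase Finset.univ _ (Finset.mem_univ S), dif_pos hScard,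
    if_neg (by exact hDne)] at ht
  set rest : ℤ := ∏ S' ∈ Finset.univ.erase S,
      (if h : S'.card = n + d then
        (if ((augmentedMatrix n d m A₁ A₂).submatrix (fun i => S'.orderEmbOfFin h i) id).det = 0
          then 1
          else |((augmentedMatrix n d m A₁ A₂).submatrix (fun i => S'.orderEmbOfFin h i) id).det|)
       else 1) with hrestdef
  rcases le_or_gt 0 D with hD0 | hD0
  · refine ⟨rest * w, ?_⟩
    rw [ht]
    simp only [Int.cast_mul, Int.cast_abs, Int.cast_neg]
    rw [abs_of_nonneg (by exact_mod_cast hD0 : (0:ℝ) ≤ (D:ℝ))]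
    linear_combination (rest : ℝ) * hDy
  · refine ⟨-(rest * w), ?_⟩
    rw [ht]
    simp only [Int.cast_mul, Int.cast_abs, Int.cast_neg]
    rw [abs_of_neg (by exact_mod_cast hD0 : (D:ℝ) < 0)]
    linear_combination (-(rest : ℝ)) * hDy

theorem fiber_vertices_become_integral_after_scaling (n d m : ℕ)
    (A₁ : Matrix (Fin m) (Fin n) ℤ) (A₂ : Matrix (Fin m) (Fin d) ℤ) (b : Fin m → ℤ)
    (P : Set ((Fin n → ℝ) × (Fin d → ℝ)))
    (hP : P = {p | ∀ i, (∑ j, (A₁ i j : ℝ) * p.1 j) + (∑ j, (A₂ i j : ℝ) * p.2 j) ≤ (b i : ℝ)})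
    (hbdd : Bornology.IsBounded P)
    (t : ℤ)
    (ht : t = ∏ S : Finset (Fin (m + 2 * n)),
      (if h : S.card = n + d then
        (if ((augmentedMatrix n d m A₁ A₂).submatrix (fun i => S.orderEmbOfFin h i) id).det = 0
          then 1
          else |((augmentedMatrix n d m A₁ A₂).submatrix (fun i => S.orderEmbOfFin h i) id).det|)
       else 1)) :
    0 < t ∧
    ∀ (xhat : Fin n → ℤ) (yhat : Fin d → ℝ),
      ((fun i => ((xhat i : ℝ))), yhat) ∈
        Set.extremePoints ℝ {p ∈ P | p.1 = fun i => ((xhat i : ℝ))} →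
      ∀ j, ∃ z : ℤ, (t : ℝ) * yhat j = (z : ℝ) := by
  have htpos : 0 < t := by
    rw [ht]
    refine Finset.prod_pos fun S _ => ?_
    split
    · split
      · exact one_pos
      · next h => exact abs_pos.mpr h
    · exact one_pos
  refine ⟨htpos, ?_⟩
  intro xhat yhat hext j
  subst hP
  have hspan := span_active_rows n d m A₁ A₂ b xhat yhat hext
  exact cramer_step n d m A₁ A₂ b xhat yhat t ht hspan j
end

section
/- Let P ⊆ ℝ^n × ℝ^d be a polytope (the convex hull of finitely many rational points). Then every extreme point of the mixed-integer hull P_MI = conv(P ∩ (ℤ^n × ℝ^d)) lies in a face F of P with dim(F) ≤ n. -/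
open Finset Pointwise

/-- `F` is a face of `P`: the set of maximizers over `P` of some linear functional
(including `P` itself, via the zero functional). -/
def IsFaceOf {E : Type*} [AddCommGroup E] [Module ℝ E] (F P : Set E) : Prop :=
  ∃ c : E →ₗ[ℝ] ℝ, F = {z ∈ P | ∀ w ∈ P, c w ≤ c z}

/-- Every element of the vector span of a finite set `S` is a combination
`∑ v ∈ S, δ v • v` with `∑ δ v = 0`. -/
lemma exists_delta_of_mem_vectorSpan {E : Type*} [AddCommGroup E] [Module ℝ E]
    (S : Finset E) (w : E) (hw : w ∈ vectorSpan ℝ (S : Set E)) :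
    ∃ δ : E → ℝ, ∑ v ∈ S, δ v = 0 ∧ ∑ v ∈ S, δ v • v = w := by
  classical
  let T : Submodule ℝ E :=
    { carrier := {x | ∃ δ : E → ℝ, ∑ v ∈ S, δ v = 0 ∧ ∑ v ∈ S, δ v • v = x}
      add_mem' := by
        rintro a b ⟨δ₁, h11, h12⟩ ⟨δ₂, h21, h22⟩
        refine ⟨fun v => δ₁ v + δ₂ v, ?_, ?_⟩
        · rw [Finset.sum_add_distrib, h11, h21, add_zero]
        · simp only [add_smul]; rw [Finset.sum_add_distrib, h12, h22]
      zero_mem' := ⟨fun _ => 0, by simp, by simp⟩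
      smul_mem' := by
        rintro t a ⟨δ, h1, h2⟩
        refine ⟨fun v => t * δ v, ?_, ?_⟩
        · rw [← Finset.mul_sum, h1, mul_zero]
        · simp only [mul_smul]
          rw [← Finset.smul_sum, h2] }
  have hle : vectorSpan ℝ (S : Set E) ≤ T := by
    rw [vectorSpan_def]
    refine Submodule.span_le.2 ?_
    rintro x hx
    obtain ⟨a, ha, b, hb, rfl⟩ := Set.mem_vsub.1 hx
    have ha' : a ∈ S := ha
    have hb' : b ∈ S := hb
    refine ⟨fun v => (if v = a then (1:ℝ) else 0) - (if v = b then (1:ℝ) else 0), ?_, ?_⟩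
    · rw [Finset.sum_sub_distrib]
      rw [Finset.sum_ite_eq' S a (fun _ => (1:ℝ)), Finset.sum_ite_eq' S b (fun _ => (1:ℝ))]
      simp [ha', hb']
    · simp only [sub_smul, ite_smul, one_smul, zero_smul]
      rw [Finset.sum_sub_distrib]
      rw [Finset.sum_ite_eq' S a (fun v => v), Finset.sum_ite_eq' S b (fun v => v)]
      simp [ha', hb', vsub_eq_sub]
  exact hle hw

lemma vectorSpan_convexHull_eq {E : Type*} [AddCommGroup E] [Module ℝ E] (s : Set E) :
    vectorSpan ℝ (convexHull ℝ s) = vectorSpan ℝ s := by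
  rw [← direction_affineSpan, affineSpan_convexHull, direction_affineSpan]

set_option maxHeartbeats 1000000 in
theorem extreme_points_of_MI_hull_lie_in_low_dim_faces (n d : ℕ)
    (V : Finset ((Fin n → ℝ) × (Fin d → ℝ)))
    (hVrat : ∀ v ∈ V, (∀ i, ∃ q : ℚ, v.1 i = (q : ℝ)) ∧ (∀ j, ∃ q : ℚ, v.2 j = (q : ℝ)))
    (P : Set ((Fin n → ℝ) × (Fin d → ℝ))) (hP : P = convexHull ℝ ↑V)
    (PMI : Set ((Fin n → ℝ) × (Fin d → ℝ)))
    (hPMI : PMI = convexHull ℝ (P ∩ {p | ∀ i, ∃ z : ℤ, p.1 i = (z : ℝ)})) :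
    ∀ p ∈ Set.extremePoints ℝ PMI,
      ∃ F : Set ((Fin n → ℝ) × (Fin d → ℝ)),
        IsFaceOf F P ∧ p ∈ F ∧ Module.finrank ℝ ↥(vectorSpan ℝ F) ≤ n := by
  classical
  intro p hpext
  have hpgen : p ∈ P ∩ {q : (Fin n → ℝ) × (Fin d → ℝ) | ∀ i, ∃ z : ℤ, q.1 i = (z : ℝ)} := by
    have h := hpext
    rw [hPMI] at h
    exact extremePoints_convexHull_subset h
  have hpP : p ∈ P := hpgen.1
  have hgenPMI : P ∩ {q : (Fin n → ℝ) × (Fin d → ℝ) | ∀ i, ∃ z : ℤ, q.1 i = (z : ℝ)} ⊆ PMI := by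
    rw [hPMI]; exact subset_convexHull ℝ _
  -- representations of p
  set Rep : (((Fin n → ℝ) × (Fin d → ℝ)) → ℝ) → Prop := fun μ =>
    (∀ v ∈ V, 0 ≤ μ v) ∧ ∑ v ∈ V, μ v = 1 ∧ ∑ v ∈ V, μ v • v = p with hRepdef
  have hex : ∃ μ, Rep μ := by
    have h := hpP
    rw [hP] at h
    exact Finset.mem_convexHull'.1 h
  -- choose a representation of maximal support
  set C : Set ℕ := {k | ∃ μ, Rep μ ∧ (V.filter fun v => 0 < μ v).card = k} with hCdef
  have hCne : C.Nonempty := ⟨_, hex.choose, hex.choose_spec, rfl⟩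
  have hCbdd : BddAbove C := ⟨V.card, by rintro k ⟨μ, _, rfl⟩; exact Finset.card_filter_le _ _⟩
  obtain ⟨μ₀, hμ₀, hcard⟩ : ∃ μ, Rep μ ∧ (V.filter fun v => 0 < μ v).card = sSup C :=
    Nat.sSup_mem hCne hCbdd
  set S : Finset ((Fin n → ℝ) × (Fin d → ℝ)) := V.filter fun v => 0 < μ₀ v with hSdef
  have hSV : S ⊆ V := Finset.filter_subset _ _
  have hSVs : (S : Set ((Fin n → ℝ) × (Fin d → ℝ))) ⊆ ↑V := Finset.coe_subset.2 hSV
  have hSpos : ∀ v ∈ S, 0 < μ₀ v := fun v hv => (Finset.mem_filter.1 hv).2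
  have hzero : ∀ v ∈ V, v ∉ S → μ₀ v = 0 := by
    intro v hv hvS
    have h1 : ¬ (0 < μ₀ v) := fun h => hvS (Finset.mem_filter.2 ⟨hv, h⟩)
    exact le_antisymm (not_lt.1 h1) (hμ₀.1 v hv)
  have hsum1 : ∑ v ∈ S, μ₀ v = 1 := by
    rw [Finset.sum_subset hSV (fun v hv hvS => hzero v hv hvS)]
    exact hμ₀.2.1
  have hsump : ∑ v ∈ S, μ₀ v • v = p := by
    rw [Finset.sum_subset hSV (fun v hv hvS => by rw [hzero v hv hvS, zero_smul])]
    exact hμ₀.2.2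
  have hSne : S.Nonempty := by
    by_contra h
    rw [Finset.not_nonempty_iff_eq_empty] at h
    rw [h, Finset.sum_empty] at hsum1
    norm_num at hsum1
  -- maximality of the support S
  have hmax : ∀ μ, Rep μ → ∀ v ∈ V, 0 < μ v → v ∈ S := by
    intro μ hμ v₀ hv₀V hv₀pos
    by_contra hv₀S
    set μ' : ((Fin n → ℝ) × (Fin d → ℝ)) → ℝ := fun v => 2⁻¹ * μ₀ v + 2⁻¹ * μ v with hμ'def
    have hRμ' : Rep μ' := by
      refine ⟨fun v hv => ?_, ?_, ?_⟩
      · have h1 := hμ₀.1 v hv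
        have h2 := hμ.1 v hv
        simp only [hμ'def]
        positivity
      · simp only [hμ'def]
        rw [Finset.sum_add_distrib, ← Finset.mul_sum, ← Finset.mul_sum, hμ₀.2.1, hμ.2.1]
        norm_num
      · simp only [hμ'def, add_smul, mul_smul]
        rw [Finset.sum_add_distrib, ← Finset.smul_sum, ← Finset.smul_sum, hμ₀.2.2, hμ.2.2,
          ← add_smul]
        norm_num
    have hsub : insert v₀ S ⊆ V.filter fun v => 0 < μ' v := by
      intro v hv
      rcases Finset.mem_insert.1 hv with rfl | hvS
      · refine Finset.mem_filter.2 ⟨hv₀V, ?_⟩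
        have h1 := hμ₀.1 v hv₀V
        simp only [hμ'def]
        positivity
      · refine Finset.mem_filter.2 ⟨hSV hvS, ?_⟩
        have h1 := hSpos v hvS
        have h2 := hμ.1 v (hSV hvS)
        simp only [hμ'def]
        positivity
    have hcard' : (V.filter fun v => 0 < μ' v).card ∈ C := ⟨μ', hRμ', rfl⟩
    have hle := le_csSup hCbdd hcard'
    have hgt : sSup C + 1 ≤ (V.filter fun v => 0 < μ' v).card := by
      calc sSup C + 1 = S.card + 1 := by rw [hcard]
        _ = (insert v₀ S).card := (Finset.card_insert_of_notMem hv₀S).symm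
        _ ≤ (V.filter fun v => 0 < μ' v).card := Finset.card_le_card hsub
    omega
  -- the vector span of S
  set W : Submodule ℝ ((Fin n → ℝ) × (Fin d → ℝ)) :=
    vectorSpan ℝ (S : Set ((Fin n → ℝ) × (Fin d → ℝ))) with hWdef
  -- perturbation lemma: for w ∈ W, small perturbations of p stay in conv S
  have hperturb : ∀ w, w ∈ W → ∃ ε : ℝ, 0 < ε ∧
      ∀ s : ℝ, |s| ≤ ε → p + s • w ∈ convexHull ℝ (S : Set ((Fin n → ℝ) × (Fin d → ℝ))) := by
    intro w hw
    obtain ⟨δ, hδ0, hδw⟩ := exists_delta_of_mem_vectorSpan S w hw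
    have hεpos : 0 < S.inf' hSne (fun v => μ₀ v / (|δ v| + 1)) := by
      rw [Finset.lt_inf'_iff]
      intro v hv
      have := hSpos v hv
      positivity
    refine ⟨S.inf' hSne (fun v => μ₀ v / (|δ v| + 1)), hεpos, ?_⟩
    intro s hs
    set ε := S.inf' hSne (fun v => μ₀ v / (|δ v| + 1)) with hεdef
    have hεle : ∀ v ∈ S, ε * (|δ v| + 1) ≤ μ₀ v := by
      intro v hv
      have h1 : ε ≤ μ₀ v / (|δ v| + 1) := Finset.inf'_le _ hv
      have h2 : (0:ℝ) < |δ v| + 1 := by positivity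
      calc ε * (|δ v| + 1) ≤ (μ₀ v / (|δ v| + 1)) * (|δ v| + 1) :=
            mul_le_mul_of_nonneg_right h1 h2.le
        _ = μ₀ v := by field_simp
    refine Finset.mem_convexHull'.2 ⟨fun v => μ₀ v + s * δ v, ?_, ?_, ?_⟩
    · intro v hv
      have h1 : |s * δ v| ≤ μ₀ v := by
        rw [abs_mul]
        calc |s| * |δ v| ≤ ε * |δ v| :=
              mul_le_mul_of_nonneg_right hs (abs_nonneg _)
          _ ≤ ε * (|δ v| + 1) := by nlinarith [abs_nonneg (δ v)]
          _ ≤ μ₀ v := hεle v hv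
      have h2 := neg_abs_le (s * δ v)
      show 0 ≤ μ₀ v + s * δ v
      linarith
    · rw [Finset.sum_add_distrib, hsum1, ← Finset.mul_sum, hδ0, mul_zero, add_zero]
    · simp only [add_smul, mul_smul]
      rw [Finset.sum_add_distrib, hsump, ← Finset.smul_sum, hδw]
  -- key claim: W meets {w | w.1 = 0} trivially
  have hWD : ∀ w, w ∈ W → w.1 = 0 → w = 0 := by
    intro w hw hw1
    obtain ⟨ε, hεpos, hmem⟩ := hperturb w hw
    have hplus : p + ε • w ∈ PMI := by
      apply hgenPMI
      constructor
      · rw [hP]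
        exact convexHull_mono hSVs (hmem ε (by rw [abs_of_pos hεpos]))
      · intro i
        have heq : (p + ε • w).1 = p.1 := by
          rw [Prod.fst_add, Prod.smul_fst, hw1, smul_zero, add_zero]
        rw [heq]
        exact hpgen.2 i
    have hminus : p + (-ε) • w ∈ PMI := by
      apply hgenPMI
      constructor
      · rw [hP]
        exact convexHull_mono hSVs (hmem (-ε) (by rw [abs_neg, abs_of_pos hεpos]))
      · intro i
        have heq : (p + (-ε) • w).1 = p.1 := by
          rw [Prod.fst_add, Prod.smul_fst, hw1, smul_zero, add_zero]
        rw [heq]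
        exact hpgen.2 i
    have hseg : p ∈ openSegment ℝ (p + (-ε) • w) (p + ε • w) := by
      refine ⟨2⁻¹, 2⁻¹, by norm_num, by norm_num, by norm_num, ?_⟩
      module
    obtain ⟨h1, h2⟩ := (mem_extremePoints.1 hpext).2 _ hminus _ hplus hseg
    have h3 : ε • w = 0 := by
      rwa [add_eq_left] at h2
    exact (smul_eq_zero.1 h3).resolve_left (ne_of_gt hεpos)
  -- construct the exposing functional
  have hc : ∃ c : ((Fin n → ℝ) × (Fin d → ℝ)) →ₗ[ℝ] ℝ,
      (∀ v ∈ S, c v = c p) ∧ (∀ v ∈ V, v ∉ S → c v < c p) := by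
    by_cases hcase : ∀ v ∈ V, v ∈ S
    · exact ⟨0, by simp, fun v hv hvs => absurd (hcase v hv) hvs⟩
    · push_neg at hcase
      obtain ⟨v₁, hv₁V, hv₁S⟩ := hcase
      set K : Set ((Fin n → ℝ) × (Fin d → ℝ)) :=
        convexHull ℝ ((V \ S : Finset _) : Set _) with hKdef
      set B : Set ((Fin n → ℝ) × (Fin d → ℝ)) := K + (W : Set ((Fin n → ℝ) × (Fin d → ℝ))) with hBdef
      have hKco : Convex ℝ K := convex_convexHull _ _
      have hKcp : IsCompact K := (V \ S).finite_toSet.isCompact_convexHull ℝ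
      have hWcl : IsClosed (W : Set ((Fin n → ℝ) × (Fin d → ℝ))) :=
        Submodule.closed_of_finiteDimensional W
      have hBcl : IsClosed B := hWcl.add_left_of_isCompact hKcp
      have hBco : Convex ℝ B := hKco.add W.convex
      have hinterS : V ∩ S = S := Finset.inter_eq_right.2 hSV
      have hinterD : V ∩ (V \ S) = V \ S := Finset.inter_eq_right.2 Finset.sdiff_subset
      have hpB : p ∉ B := by
        intro hpB'
        rw [hBdef, Set.mem_add] at hpB'
        obtain ⟨q, hq, w, hw, hqw⟩ := hpB'
        obtain ⟨ε, hεpos, hmem⟩ := hperturb w hw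
        have h1ε : (0:ℝ) < 1 + ε := by linarith
        obtain ⟨ν, hν0, hν1, hνp⟩ := Finset.mem_convexHull'.1 (hmem ε (by rw [abs_of_pos hεpos]))
        obtain ⟨κ, hκ0, hκ1, hκq⟩ := Finset.mem_convexHull'.1 hq
        set μ' : ((Fin n → ℝ) × (Fin d → ℝ)) → ℝ := fun v =>
          (if v ∈ S then (1 + ε)⁻¹ * ν v else 0) +
          (if v ∈ V \ S then (ε / (1 + ε)) * κ v else 0) with hμ'def
        have hsumS : ∑ v ∈ V, (if v ∈ S then (1 + ε)⁻¹ * ν v else 0) = (1 + ε)⁻¹ := by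
          rw [Finset.sum_ite_mem, hinterS, ← Finset.mul_sum, hν1, mul_one]
        have hsumD : ∑ v ∈ V, (if v ∈ V \ S then (ε / (1 + ε)) * κ v else 0) = ε / (1 + ε) := by
          rw [Finset.sum_ite_mem, hinterD, ← Finset.mul_sum, hκ1, mul_one]
        have hvecS : ∑ v ∈ V, (if v ∈ S then (1 + ε)⁻¹ * ν v else 0) • v
            = (1 + ε)⁻¹ • (p + ε • w) := by
          have h : ∀ v : (Fin n → ℝ) × (Fin d → ℝ),
              (if v ∈ S then (1 + ε)⁻¹ * ν v else 0) • v
              = (if v ∈ S then ((1 + ε)⁻¹ * ν v) • v else 0) := by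
            intro v; split_ifs <;> simp
          rw [Finset.sum_congr rfl fun v _ => h v, Finset.sum_ite_mem, hinterS]
          simp only [mul_smul]
          rw [← Finset.smul_sum, hνp]
        have hvecD : ∑ v ∈ V, (if v ∈ V \ S then (ε / (1 + ε)) * κ v else 0) • v
            = (ε / (1 + ε)) • q := by
          have h : ∀ v : (Fin n → ℝ) × (Fin d → ℝ),
              (if v ∈ V \ S then (ε / (1 + ε)) * κ v else 0) • v
              = (if v ∈ V \ S then ((ε / (1 + ε)) * κ v) • v else 0) := by
            intro v; split_ifs <;> simp
          rw [Finset.sum_congr rfl fun v _ => h v, Finset.sum_ite_mem, hinterD]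
          simp only [mul_smul]
          rw [← Finset.smul_sum, hκq]
        have hqpw : q = p - w := by
          rw [← hqw]; abel
        have hRμ' : Rep μ' := by
          refine ⟨fun v hv => ?_, ?_, ?_⟩
          · have hA : (0:ℝ) ≤ (if v ∈ S then (1 + ε)⁻¹ * ν v else 0) := by
              by_cases h : v ∈ S
              · rw [if_pos h]; exact mul_nonneg (by positivity) (hν0 _ h)
              · rw [if_neg h]
            have hB : (0:ℝ) ≤ (if v ∈ V \ S then (ε / (1 + ε)) * κ v else 0) := by
              by_cases h : v ∈ V \ S
              · rw [if_pos h]; exact mul_nonneg (by positivity) (hκ0 _ h)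
              · rw [if_neg h]
            simp only [hμ'def]
            exact add_nonneg hA hB
          · simp only [hμ'def]
            rw [Finset.sum_add_distrib, hsumS, hsumD]
            field_simp
          · simp only [hμ'def, add_smul]
            rw [Finset.sum_add_distrib, hvecS, hvecD, hqpw]
            match_scalars <;> field_simp <;> ring
        obtain ⟨v₂, hv₂, hκv₂⟩ : ∃ v ∈ V \ S, κ v ≠ 0 := by
          apply Finset.exists_ne_zero_of_sum_ne_zero
          rw [hκ1]; norm_num
        have hv₂pos : 0 < μ' v₂ := by
          have hκpos : 0 < κ v₂ := lt_of_le_of_ne (hκ0 v₂ hv₂) (Ne.symm hκv₂)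
          simp only [hμ'def, if_neg (Finset.mem_sdiff.1 hv₂).2, if_pos hv₂, zero_add]
          positivity
        exact (Finset.mem_sdiff.1 hv₂).2 (hmax μ' hRμ' v₂ (Finset.mem_sdiff.1 hv₂).1 hv₂pos)
      obtain ⟨f, u, hfB, hfp⟩ := geometric_hahn_banach_closed_point hBco hBcl hpB
      have hk₁ : v₁ ∈ K := subset_convexHull ℝ _ (by
        simp only [Finset.coe_sdiff, Set.mem_diff, Finset.mem_coe]
        exact ⟨hv₁V, hv₁S⟩)
      have hf0 : ∀ w ∈ W, f w = 0 := by
        intro w hw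
        by_contra hne
        have hmem : ∀ t : ℝ, f v₁ + t * f w < u := by
          intro t
          have hB' : v₁ + t • w ∈ B := Set.add_mem_add hk₁ (W.smul_mem t hw)
          have := hfB _ hB'
          simpa [map_add, map_smul, smul_eq_mul] using this
        have h1 := hmem ((u - f v₁ + 1) / f w)
        rw [div_mul_cancel₀ _ hne] at h1
        linarith
      refine ⟨(f : ((Fin n → ℝ) × (Fin d → ℝ)) →ₗ[ℝ] ℝ), ?_, ?_⟩
      · intro v hv
        have hpv : p - v ∈ W := by
          have heq : p - v = ∑ u ∈ S, μ₀ u • (u - v) := by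
            rw [Finset.sum_congr rfl (fun u _ => smul_sub (μ₀ u) u v)]
            rw [Finset.sum_sub_distrib, hsump, ← Finset.sum_smul, hsum1, one_smul]
          rw [heq]
          refine Submodule.sum_mem _ (fun u hu => Submodule.smul_mem _ _ ?_)
          have hmem' : u - v ∈ (S : Set ((Fin n → ℝ) × (Fin d → ℝ)))
              -ᵥ (S : Set ((Fin n → ℝ) × (Fin d → ℝ))) := Set.vsub_mem_vsub hu hv
          exact vsub_set_subset_vectorSpan ℝ _ hmem'
        have h0 := hf0 _ hpv
        rw [map_sub] at h0
        simp only [ContinuousLinearMap.coe_coe]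
        linarith
      · intro v hv hvS
        have hvB : v ∈ B := by
          have hvK : v ∈ K := subset_convexHull ℝ _ (by
            simp only [Finset.coe_sdiff, Set.mem_diff, Finset.mem_coe]
            exact ⟨hv, hvS⟩)
          have h' : v + 0 ∈ B := Set.add_mem_add hvK W.zero_mem
          simpa using h'
        have h1 := hfB v hvB
        simp only [ContinuousLinearMap.coe_coe]
        linarith
  obtain ⟨c, hc1, hc2⟩ := hc
  -- the halfspace bound
  have hVhalf : (V : Set ((Fin n → ℝ) × (Fin d → ℝ))) ⊆ {z | c z ≤ c p} := by
    intro v hv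
    have hv' : v ∈ V := hv
    by_cases h : v ∈ S
    · exact le_of_eq (hc1 v h)
    · exact le_of_lt (hc2 v hv' h)
  have hPhalf : P ⊆ {z | c z ≤ c p} := by
    rw [hP]
    exact convexHull_min hVhalf (convex_halfSpace_le (LinearMap.isLinear c) _)
  refine ⟨{z ∈ P | ∀ w ∈ P, c w ≤ c z}, ⟨c, rfl⟩, ⟨hpP, fun w hw => hPhalf hw⟩, ?_⟩
  -- the face is contained in conv S
  have hFsub : {z ∈ P | ∀ w ∈ P, c w ≤ c z}
      ⊆ convexHull ℝ (S : Set ((Fin n → ℝ) × (Fin d → ℝ))) := by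
    rintro z ⟨hzP, hzmax⟩
    have hczp : c z = c p := le_antisymm (hPhalf hzP) (hzmax p hpP)
    have hz' := hzP
    rw [hP] at hz'
    obtain ⟨μ, hμ0, hμ1, hμz⟩ := Finset.mem_convexHull'.1 hz'
    have hcz : ∑ v ∈ V, μ v * c v = c z := by
      rw [← hμz, map_sum]
      exact Finset.sum_congr rfl (fun v _ => by rw [map_smul, smul_eq_mul])
    have hzero' : ∑ v ∈ V, μ v * (c p - c v) = 0 := by
      have hsplit : ∑ v ∈ V, μ v * (c p - c v)
          = (∑ v ∈ V, μ v) * c p - ∑ v ∈ V, μ v * c v := by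
        rw [Finset.sum_mul, ← Finset.sum_sub_distrib]
        exact Finset.sum_congr rfl (fun v _ => by ring)
      rw [hsplit, hμ1, one_mul, hcz, hczp, sub_self]
    have hterms := (Finset.sum_eq_zero_iff_of_nonneg (fun v hv =>
      mul_nonneg (hμ0 v hv) (sub_nonneg.2 (hVhalf hv)))).1 hzero'
    have hkey : ∀ v ∈ V, v ∉ S → μ v = 0 := by
      intro v hv hvS
      rcases mul_eq_zero.1 (hterms v hv) with h | h
      · exact h
      · exfalso
        have := hc2 v hv hvS
        rw [sub_eq_zero] at h
        linarith
    refine Finset.mem_convexHull'.2 ⟨μ, fun v hv => hμ0 v (hSV hv), ?_, ?_⟩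
    · rw [Finset.sum_subset hSV (fun v hv hvS => hkey v hv hvS)]
      exact hμ1
    · rw [Finset.sum_subset hSV (fun v hv hvS => by rw [hkey v hv hvS, zero_smul])]
      exact hμz
  have hWle : vectorSpan ℝ {z ∈ P | ∀ w ∈ P, c w ≤ c z} ≤ W := by
    calc vectorSpan ℝ {z ∈ P | ∀ w ∈ P, c w ≤ c z}
        ≤ vectorSpan ℝ (convexHull ℝ (S : Set ((Fin n → ℝ) × (Fin d → ℝ)))) :=
          vectorSpan_mono ℝ hFsub
      _ = W := by rw [vectorSpan_convexHull_eq]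
  -- finrank computation
  have hWn : Module.finrank ℝ W ≤ n := by
    set D : Submodule ℝ ((Fin n → ℝ) × (Fin d → ℝ)) :=
      LinearMap.ker (LinearMap.fst ℝ (Fin n → ℝ) (Fin d → ℝ)) with hDdef
    have hWDbot : W ⊓ D = ⊥ := by
      rw [eq_bot_iff]
      rintro w ⟨hwW, hwD⟩
      rw [Submodule.mem_bot]
      exact hWD w hwW (LinearMap.mem_ker.1 hwD)
    have hDrank : Module.finrank ℝ D = d := by
      have hDeq : D = LinearMap.range (LinearMap.inr ℝ (Fin n → ℝ) (Fin d → ℝ)) := by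
        ext ⟨a, b⟩
        simp only [hDdef, LinearMap.mem_ker, LinearMap.fst_apply, LinearMap.mem_range,
          LinearMap.inr_apply, Prod.mk.injEq]
        constructor
        · intro h
          exact ⟨b, h.symm, rfl⟩
        · rintro ⟨y, h1, h2⟩
          exact h1.symm
      rw [hDeq, LinearMap.finrank_range_of_inj LinearMap.inr_injective]
      simp [Module.finrank_fin_fun]
    have hErank : Module.finrank ℝ ((Fin n → ℝ) × (Fin d → ℝ)) = n + d := by
      rw [Module.finrank_prod]
      simp [Module.finrank_fin_fun]
    have hsum := Submodule.finrank_sup_add_finrank_inf_eq W D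
    rw [hWDbot] at hsum
    have hbot : Module.finrank ℝ (⊥ : Submodule ℝ ((Fin n → ℝ) × (Fin d → ℝ))) = 0 :=
      finrank_bot ℝ _
    rw [hbot, add_zero] at hsum
    have hle : Module.finrank ℝ ↥(W ⊔ D) ≤ n + d := hErank ▸ Submodule.finrank_le _
    omega
  calc Module.finrank ℝ ↥(vectorSpan ℝ {z ∈ P | ∀ w ∈ P, c w ≤ c z})
      ≤ Module.finrank ℝ W := Submodule.finrank_mono hWle
    _ ≤ n := hWn
end

section
/- Let v¹, …, v^(k+1) ∈ ℝ^n × ℝ^d and let x̂ ∈ ℝ^n. Then the polytope {(x,y) ∈ ℝ^n × ℝ^d : (x,y) = ∑_{i=1}^{k+1} λ_i v^i for some λ_i ≥ 0 with ∑_{i=1}^{k+1} λ_i = 1, and x = x̂} has at most 2^(k+1) extreme points. -/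
theorem fiber_of_simplex_has_few_extreme_points (n d k : ℕ)
    (v : Fin (k + 1) → (Fin n → ℝ) × (Fin d → ℝ)) (xhat : Fin n → ℝ)
    (S : Set ((Fin n → ℝ) × (Fin d → ℝ)))
    (hS : S = {p | (∃ lam : Fin (k + 1) → ℝ,
        (∀ i, 0 ≤ lam i) ∧ (∑ i, lam i) = 1 ∧ p = ∑ i, lam i • v i) ∧ p.1 = xhat}) :
    (Set.extremePoints ℝ S).Finite ∧ (Set.extremePoints ℝ S).ncard ≤ 2 ^ (k + 1) := by
  classical
  set E := Set.extremePoints ℝ S with hE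
  have hrep : ∀ p ∈ E, ∃ lam : Fin (k + 1) → ℝ,
      (∀ i, 0 ≤ lam i) ∧ (∑ i, lam i) = 1 ∧ p = ∑ i, lam i • v i := by
    intro p hp
    have := hp.1
    rw [hS] at this
    exact this.1
  choose! lam hlam0 hlam1 hlamv using hrep
  set f : ((Fin n → ℝ) × (Fin d → ℝ)) → Finset (Fin (k + 1)) :=
    fun p => Finset.univ.filter (fun i => lam p i ≠ 0) with hf
  have key : Set.InjOn f E := by
    intro p hp q hq hfpq
    by_contra hne
    set lp := lam p with hlp
    set lq := lam q with hlq
    have hsupp : ∀ i, lp i ≠ 0 ↔ lq i ≠ 0 := by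
      intro i
      have := Finset.ext_iff.1 hfpq i
      simpa [hf] using this
    -- support is nonempty
    have hT : ∃ i, lp i ≠ 0 := by
      by_contra h
      push_neg at h
      have : (∑ i, lp i) = 0 := Finset.sum_eq_zero fun i _ => h i
      rw [hlam1 p hp] at this
      norm_num at this
    set T := Finset.univ.filter (fun i => lp i ≠ 0) with hT'
    have hTne : T.Nonempty := by
      obtain ⟨i, hi⟩ := hT
      exact ⟨i, by simp [hT', hi]⟩
    obtain ⟨i0, hi0, hmin⟩ := T.exists_min_image (fun i => lp i / (lq i + 1)) hTne
    set ε := lp i0 / (lq i0 + 1) with hε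
    have hq1 : ∀ i, (0:ℝ) < lq i + 1 := fun i => by linarith [hlam0 q hq i]
    have hεpos : 0 < ε := by
      have hi0' : lp i0 ≠ 0 := by simpa [hT'] using hi0
      have := hlam0 p hp i0
      exact div_pos (lt_of_le_of_ne this (Ne.symm hi0')) (hq1 i0)
    -- new coefficients
    set lam' : Fin (k + 1) → ℝ := fun i => (1 + ε) * lp i - ε * lq i with hlam'
    have hnonneg : ∀ i, 0 ≤ lam' i := by
      intro i
      by_cases h : lp i = 0
      · have h2 : lq i = 0 := by
          by_contra h2
          exact (hsupp i).2 h2 h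
        simp [hlam', h, h2]
      · have hiT : i ∈ T := by simp [hT', h]
        have hle : ε ≤ lp i / (lq i + 1) := hmin i hiT
        have : ε * (lq i + 1) ≤ lp i := by
          rw [← le_div_iff₀ (hq1 i)]; exact hle
        have h0 := hlam0 p hp i
        have h0' := hlam0 q hq i
        simp only [hlam']
        nlinarith [hεpos.le]
    have hsum : (∑ i, lam' i) = 1 := by
      simp only [hlam', Finset.sum_sub_distrib, ← Finset.mul_sum,
        hlam1 p hp, hlam1 q hq]
      rw [show (∑ i, lp i) = 1 from hlam1 p hp, show (∑ i, lq i) = 1 from hlam1 q hq]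
      ring
    set p' := ∑ i, lam' i • v i with hp'
    have hp'eq : p' = (1 + ε) • p - ε • q := by
      rw [hp', hlamv p hp, hlamv q hq, Finset.smul_sum, Finset.smul_sum,
        ← Finset.sum_sub_distrib]
      refine Finset.sum_congr rfl fun i _ => ?_
      simp only [hlam', sub_smul, mul_smul]
      rfl
    have hpx : p.1 = xhat := by
      have := hp.1; rw [hS] at this; exact this.2
    have hqx : q.1 = xhat := by
      have := hq.1; rw [hS] at this; exact this.2
    have hp'S : p' ∈ S := by
      rw [hS]
      refine ⟨⟨lam', hnonneg, hsum, rfl⟩, ?_⟩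
      rw [hp'eq]
      show (1 + ε) • p.1 - ε • q.1 = xhat
      rw [hpx, hqx, ← sub_smul]
      simp
    have hqS : q ∈ S := hq.1
    -- p ∈ openSegment p' q
    have h1ε : (1:ℝ) + ε ≠ 0 := by positivity
    have hseg : p ∈ openSegment ℝ p' q := by
      refine ⟨1 / (1 + ε), ε / (1 + ε), by positivity, by positivity, ?_, ?_⟩
      · field_simp
      · rw [hp'eq]
        match_scalars <;> field_simp <;> ring
    have := hp.2 hqS hp'S (by rw [openSegment_symm]; exact hseg)
    exact hne this.symm
  have hfin : E.Finite := Set.Finite.of_finite_image (Set.toFinite _) key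
  refine ⟨hfin, ?_⟩
  calc E.ncard = (f '' E).ncard := (Set.ncard_image_of_injOn key).symm
    _ ≤ (Set.univ : Set (Finset (Fin (k + 1)))).ncard :=
        Set.ncard_le_ncard (Set.subset_univ _) (Set.toFinite _)
    _ = 2 ^ (k + 1) := by
        rw [Set.ncard_univ, Nat.card_eq_fintype_card, Fintype.card_finset, Fintype.card_fin]
end

section
/- Let d be an even nonnegative integer. Let R be the (d+1)×(d+1) matrix whose first row is (1/2, 1/2, …, 1/2) and whose remaining rows are (0 | I_d) (the d×d identity preceded by a zero column). Let b_i = 2^i + 1 for i = 1, …, d+1, and let P = {R·u : u ∈ ∏_{i=1}^{d+1} [−b_i, b_i]} ⊆ ℝ^(1+d). Then no extreme point of P belongs to the mixed-integer hull P_MI = conv(P ∩ (ℤ × ℝ^d)). -/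
theorem rotated_cube_vertices_cut_off (d : ℕ) (hd : Even d)
    (R : Matrix (Fin (d + 1)) (Fin (d + 1)) ℝ)
    (hR : R = fun i j => if i = 0 then 1 / 2 else if j = i then 1 else 0)
    (b : Fin (d + 1) → ℝ) (hb : b = fun i : Fin (d + 1) => (2 : ℝ) ^ ((i : ℕ) + 1) + 1)
    (P : Set (Fin (d + 1) → ℝ))
    (hP : P = {x | ∃ u : Fin (d + 1) → ℝ, (∀ i, -(b i) ≤ u i ∧ u i ≤ b i) ∧ x = R.mulVec u}) :
    ∀ p ∈ Set.extremePoints ℝ P,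
      p ∉ convexHull ℝ (P ∩ {x | ∃ z : ℤ, x 0 = (z : ℝ)}) := by
  intro p hp hmem
  subst hP hR hb
  set R : Matrix (Fin (d + 1)) (Fin (d + 1)) ℝ :=
    fun i j => if i = 0 then 1 / 2 else if j = i then 1 else 0 with hR
  set b : Fin (d + 1) → ℝ := fun i : Fin (d + 1) => (2 : ℝ) ^ ((i : ℕ) + 1) + 1 with hb
  -- Row computations
  have hrow : ∀ (a : Fin (d + 1) → ℝ) (j : Fin (d + 1)), j ≠ 0 → R.mulVec a j = a j := by
    intro a j hj
    simp [hR, Matrix.mulVec, dotProduct, hj, ite_mul, Finset.sum_ite_eq']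
  have hrow0 : ∀ a : Fin (d + 1) → ℝ, R.mulVec a 0 = (1 / 2) * ∑ k, a k := by
    intro a
    simp [hR, Matrix.mulVec, dotProduct, Finset.mul_sum]
  -- injectivity
  have hinj : ∀ a c : Fin (d + 1) → ℝ, R.mulVec a = R.mulVec c → a = c := by
    intro a c h
    have hne : ∀ j, j ≠ 0 → a j = c j := by
      intro j hj
      rw [← hrow a j hj, ← hrow c j hj, h]
    funext j
    by_cases hj : j = 0
    · subst hj
      have h0 := congrFun h 0
      rw [hrow0 a, hrow0 c] at h0
      have hs : ∑ k, a k = ∑ k, c k := by linarith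
      rw [Fin.sum_univ_succ, Fin.sum_univ_succ] at hs
      have htail : ∑ i : Fin d, a i.succ = ∑ i : Fin d, c i.succ :=
        Finset.sum_congr rfl fun i _ => hne _ (Fin.succ_ne_zero i)
      linarith
    · exact hne j hj
  -- convexity of P
  set B : Set (Fin (d + 1) → ℝ) := {u | ∀ i, -(b i) ≤ u i ∧ u i ≤ b i} with hBdef
  set P : Set (Fin (d + 1) → ℝ) :=
    {x | ∃ u : Fin (d + 1) → ℝ, (∀ i, -(b i) ≤ u i ∧ u i ≤ b i) ∧ x = R.mulVec u} with hPdef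
  have hBconv : Convex ℝ B := by
    have hBe : B = Set.pi Set.univ fun i => Set.Icc (-(b i)) (b i) := by
      ext u
      constructor
      · intro h i _
        exact ⟨(h i).1, (h i).2⟩
      · intro h i
        exact ⟨(h i (Set.mem_univ i)).1, (h i (Set.mem_univ i)).2⟩
    rw [hBe]
    exact convex_pi fun i _ => convex_Icc _ _
  have hPconv : Convex ℝ P := by
    have hPe : P = R.mulVecLin '' B := by
      ext x
      simp only [hPdef, hBdef, Set.mem_image, Set.mem_setOf_eq, Matrix.mulVecLin_apply]
      constructor
      · rintro ⟨u, hu, rfl⟩; exact ⟨u, hu, rfl⟩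
      · rintro ⟨u, hu, rfl⟩; exact ⟨u, hu, rfl⟩
    rw [hPe]
    exact hBconv.linear_image _
  -- the hull is inside P, so p is extreme in the hull, hence in S
  have hhull : convexHull ℝ (P ∩ {x | ∃ z : ℤ, x 0 = (z : ℝ)}) ⊆ P :=
    convexHull_min Set.inter_subset_left hPconv
  rw [mem_extremePoints] at hp
  have hp' : p ∈ Set.extremePoints ℝ (convexHull ℝ (P ∩ {x | ∃ z : ℤ, x 0 = (z : ℝ)})) := by
    rw [mem_extremePoints]
    exact ⟨hmem, fun x₁ h₁ x₂ h₂ hseg => hp.2 x₁ (hhull h₁) x₂ (hhull h₂) hseg⟩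
  have hpS : p ∈ P ∩ {x | ∃ z : ℤ, x 0 = (z : ℝ)} := extremePoints_convexHull_subset hp'
  obtain ⟨hpP, z, hz⟩ := hpS
  obtain ⟨u, hu, rfl⟩ := hpP
  -- extremeness forces u i = ± b i
  have hbpos : ∀ i : Fin (d + 1), 0 < b i := by
    intro i
    have : (0 : ℝ) < 2 ^ ((i : ℕ) + 1) := by positivity
    simp only [hb]
    linarith
  have hext : ∀ i, u i = b i ∨ u i = -(b i) := by
    intro i
    by_contra hcon
    push_neg at hcon
    have h1 : u i < b i := lt_of_le_of_ne (hu i).2 hcon.1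
    have h2 : -(b i) < u i := lt_of_le_of_ne (hu i).1 (Ne.symm hcon.2)
    set δ : ℝ := min (b i - u i) (u i + b i) with hδ
    have hδpos : 0 < δ := lt_min (by linarith) (by linarith)
    have hδ1 : δ ≤ b i - u i := min_le_left _ _
    have hδ2 : δ ≤ u i + b i := min_le_right _ _
    set uP : Fin (d + 1) → ℝ := u + Pi.single i δ with hupd
    set uM : Fin (d + 1) → ℝ := u - Pi.single i δ with humd
    have huP : ∀ j, -(b j) ≤ uP j ∧ uP j ≤ b j := by
      intro j
      by_cases hji : j = i
      · subst hji
        simp only [hupd, Pi.add_apply, Pi.single_eq_same]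
        constructor <;> linarith [(hu j).1]
      · simp only [hupd, Pi.add_apply, Pi.single_eq_of_ne hji, add_zero]
        exact hu j
    have huM : ∀ j, -(b j) ≤ uM j ∧ uM j ≤ b j := by
      intro j
      by_cases hji : j = i
      · subst hji
        simp only [humd, Pi.sub_apply, Pi.single_eq_same]
        constructor <;> linarith [(hu j).2]
      · simp only [humd, Pi.sub_apply, Pi.single_eq_of_ne hji, sub_zero]
        exact hu j
    have hseg : R.mulVec u ∈ openSegment ℝ (R.mulVec uP) (R.mulVec uM) := by
      refine ⟨1 / 2, 1 / 2, by norm_num, by norm_num, by norm_num, ?_⟩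
      have hmid : (1 / 2 : ℝ) • uP + (1 / 2 : ℝ) • uM = u := by
        funext j
        simp only [hupd, humd, Pi.add_apply, Pi.smul_apply, Pi.sub_apply, smul_eq_mul]
        ring
      rw [← Matrix.mulVec_smul, ← Matrix.mulVec_smul, ← Matrix.mulVec_add, hmid]
    have hmemP : R.mulVec uP ∈ P := ⟨uP, huP, rfl⟩
    have hmemM : R.mulVec uM ∈ P := ⟨uM, huM, rfl⟩
    have heq := (hp.2 _ hmemP _ hmemM hseg).1
    have heq2 := congrFun (hinj _ _ heq) i
    simp only [hupd, Pi.add_apply, Pi.single_eq_same] at heq2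
    linarith
  -- parity contradiction
  have h0 : (1 / 2 : ℝ) * ∑ k, u k = (z : ℝ) := by rw [← hrow0 u]; exact hz
  set v : Fin (d + 1) → ℤ := fun i =>
    if u i = b i then 2 ^ ((i : ℕ) + 1) + 1 else -(2 ^ ((i : ℕ) + 1) + 1) with hv
  have hval : ∀ i, u i = ((v i : ℤ) : ℝ) := by
    intro i
    by_cases h : u i = b i
    · simp only [hv, if_pos h, h, hb]
      push_cast
      ring
    · have h' := (hext i).resolve_left h
      simp only [hv, if_neg h]
      simp only [h', hb]
      push_cast
      ring
  have hsumZ : ((∑ i, v i : ℤ) : ℝ) = ((2 * z : ℤ) : ℝ) := by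
    push_cast
    rw [← Finset.sum_congr rfl fun i _ => (hval i)]
    linarith
  have hZ : (∑ i, v i) = 2 * z := Int.cast_injective hsumZ
  have hcast := congrArg (Int.cast : ℤ → ZMod 2) hZ
  push_cast at hcast
  have h2 : (2 : ZMod 2) = 0 := by decide
  have hone : ∀ i : Fin (d + 1), ((v i : ℤ) : ZMod 2) = 1 := by
    intro i
    simp only [hv]
    split_ifs
    · push_cast
      rw [h2, zero_pow (Nat.succ_ne_zero (i : ℕ))]
      decide
    · push_cast
      rw [h2, zero_pow (Nat.succ_ne_zero (i : ℕ))]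
      decide
  rw [Finset.sum_congr rfl fun i _ => hone i] at hcast
  simp only [Finset.sum_const, Finset.card_univ, Fintype.card_fin, nsmul_eq_mul, mul_one] at hcast
  obtain ⟨k, hk⟩ := hd
  subst hk
  have hL : ((k + k + 1 : ℕ) : ZMod 2) = 1 := by
    push_cast
    have hkk : (k : ZMod 2) + k + 1 = 2 * k + 1 := by ring
    rw [hkk, h2]
    ring
  rw [hL, h2, zero_mul] at hcast
  exact one_ne_zero hcast
end

section
/- Let P ⊆ ℝ^n × ℝ^d be a polytope (the convex hull of a finite set) with P ∩ (ℤ^n × ℝ^d) ≠ ∅, and let f : ℝ^(n+d) → ℝ be a concave continuous function. Then the infimum of f over P ∩ (ℤ^n × ℝ^d) equals the minimum of f over the mixed-integer hull P_MI = conv(P ∩ (ℤ^n × ℝ^d)), and this minimum is attained at an extreme point of P_MI; in particular, there exists an extreme point (x*, y*) of P_MI with (x*, y*) ∈ P ∩ (ℤ^n × ℝ^d) and f(x*, y*) ≤ f(x, y) for all (x, y) ∈ P ∩ (ℤ^n × ℝ^d). -/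
open Set Finset

lemma aux_reindex {E : Type*} {G : Type*} [AddCommMonoid G] (t : Finset E) (m : ℕ)
    (hcard : t.card ≤ m) (e : Fin t.card ≃ {y // y ∈ t}) (F : E → G) :
    (∑ j : Fin m, if h : (j : ℕ) < t.card then F (e ⟨j, h⟩) else 0) = ∑ y ∈ t, F y := by
  rw [Fin.sum_univ_eq_sum_range (fun j => if h : j < t.card then F (e ⟨j, h⟩) else 0) m]
  rw [← Finset.sum_subset (Finset.range_subset_range.2 hcard)
    (fun j _ hj => dif_neg (by simpa using hj))]
  rw [← Fin.sum_univ_eq_sum_range (fun j => if h : j < t.card then F (e ⟨j, h⟩) else 0)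
    t.card]
  have h3 : ∀ j : Fin t.card,
      (if h : (j : ℕ) < t.card then F (e ⟨j, h⟩) else 0) = F (e j) := by
    intro j; rw [dif_pos j.isLt]
  rw [Finset.sum_congr rfl fun j _ => h3 j]
  rw [Equiv.sum_comp e (fun y : {y // y ∈ t} => F (y : E))]
  exact Finset.sum_coe_sort t F

lemma aux_isCompact_convexHull {E : Type*} [NormedAddCommGroup E] [NormedSpace ℝ E]
    [FiniteDimensional ℝ E] {s : Set E} (hs : IsCompact s) :
    IsCompact (convexHull ℝ s) := by
  rcases s.eq_empty_or_nonempty with rfl | ⟨x0, hx0⟩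
  · simp
  set m := Module.finrank ℝ E + 1 with hm
  set g : (Fin m → ℝ) × (Fin m → E) → E := fun p => ∑ i, p.1 i • p.2 i with hgdef
  have hg : Continuous g := by
    apply continuous_finset_sum
    intro i _
    exact ((continuous_apply i).comp continuous_fst).smul
      ((continuous_apply i).comp continuous_snd)
  set D : Set ((Fin m → ℝ) × (Fin m → E)) :=
    (stdSimplex ℝ (Fin m)) ×ˢ (Set.pi Set.univ fun _ : Fin m => s) with hD
  have hDc : IsCompact D := (isCompact_stdSimplex (𝕜 := ℝ) (ι := Fin m)).prod (isCompact_univ_pi fun _ => hs)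
  have key : convexHull ℝ s = g '' D := by
    apply Set.Subset.antisymm
    · intro x hx
      rw [convexHull_eq_union] at hx
      simp only [Set.mem_iUnion] at hx
      obtain ⟨t, hts, hai, hxt⟩ := hx
      have hcard : t.card ≤ m := by
        have h1 := hai.card_le_finrank_succ
        have h2 : Module.finrank ℝ (vectorSpan ℝ (Set.range (Subtype.val : t → E)))
            ≤ Module.finrank ℝ E := Submodule.finrank_le _
        rw [Fintype.card_coe] at h1
        omega
      rw [Finset.convexHull_eq] at hxt
      obtain ⟨w, hw0, hw1, hwx⟩ := hxt
      rw [Finset.centerMass_eq_of_sum_1 _ _ hw1] at hwx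
      set e : Fin t.card ≃ {y // y ∈ t} := t.equivFin.symm with he
      refine ⟨(fun j => if h : (j : ℕ) < t.card then w (e ⟨j, h⟩) else 0,
               fun j => if h : (j : ℕ) < t.card then (e ⟨j, h⟩ : E) else x0),
        ⟨⟨fun j => ?_, ?_⟩, fun j _ => ?_⟩, ?_⟩
      · dsimp only
        split
        · exact hw0 _ (e _).2
        · exact le_refl 0
      · dsimp only
        rw [aux_reindex t m hcard e w]; exact hw1
      · dsimp only
        split
        · exact hts (e _).2
        · exact hx0
      · show (∑ j : Fin m, _) = x
        dsimp only
        have h4 : ∀ j : Fin m,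
            (if h : (j : ℕ) < t.card then w (e ⟨j, h⟩) else 0) •
              (if h : (j : ℕ) < t.card then (e ⟨j, h⟩ : E) else x0) =
            if h : (j : ℕ) < t.card then w (e ⟨j, h⟩) • (e ⟨j, h⟩ : E) else 0 := by
          intro j
          split
          · rfl
          · simp
        rw [Finset.sum_congr rfl fun j _ => h4 j, aux_reindex t m hcard e (fun y => w y • y)]
        simpa using hwx
    · rintro _ ⟨⟨wv, zv⟩, ⟨⟨hw0, hw1⟩, hzv⟩, rfl⟩
      exact (convex_convexHull ℝ s).sum_mem (fun i _ => hw0 i) hw1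
        (fun i _ => subset_convexHull ℝ s (hzv i (Set.mem_univ i)))
  rw [key]
  exact hDc.image hg

theorem mixed_integer_concave_minimization (n d : ℕ)
    (V : Finset ((Fin n → ℝ) × (Fin d → ℝ)))
    (P : Set ((Fin n → ℝ) × (Fin d → ℝ))) (hP : P = convexHull ℝ ↑V)
    (MI : Set ((Fin n → ℝ) × (Fin d → ℝ)))
    (hMI : MI = {p | ∀ i, ∃ z : ℤ, p.1 i = (z : ℝ)})
    (hne : (P ∩ MI).Nonempty)
    (PMI : Set ((Fin n → ℝ) × (Fin d → ℝ)))
    (hPMI : PMI = convexHull ℝ (P ∩ MI))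
    (f : (Fin n → ℝ) × (Fin d → ℝ) → ℝ)
    (hconc : ConcaveOn ℝ Set.univ f) (hcont : Continuous f) :
    ∃ p ∈ Set.extremePoints ℝ PMI,
      p ∈ P ∩ MI ∧
      (∀ q ∈ PMI, f p ≤ f q) ∧
      sInf (f '' (P ∩ MI)) = f p := by
  have hPc : IsCompact P := by
    rw [hP]; exact V.finite_toSet.isCompact_convexHull ℝ
  have hMIclosed : IsClosed MI := by
    rw [hMI]
    have heq : {p : (Fin n → ℝ) × (Fin d → ℝ) | ∀ i, ∃ z : ℤ, p.1 i = (z : ℝ)} =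
        ⋂ i, (fun p : (Fin n → ℝ) × (Fin d → ℝ) => p.1 i) ⁻¹' (Set.range ((↑) : ℤ → ℝ)) := by
      ext p
      simp [Set.mem_iInter, Set.mem_range, eq_comm]
    rw [heq]
    exact isClosed_iInter fun i =>
      Int.isClosedEmbedding_coe_real.isClosed_range.preimage
        ((continuous_apply i).comp continuous_fst)
  have hK : IsCompact (P ∩ MI) := hPc.inter_right hMIclosed
  have hPMIc : IsCompact PMI := by
    rw [hPMI]; exact aux_isCompact_convexHull hK
  have hKsub : P ∩ MI ⊆ PMI := by
    rw [hPMI]; exact subset_convexHull ℝ _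
  have hPMIne : PMI.Nonempty := hne.mono hKsub
  obtain ⟨p0, hp0mem, hp0min⟩ := hPMIc.exists_isMinOn hPMIne hcont.continuousOn
  have hp0min' : ∀ x ∈ PMI, f p0 ≤ f x := fun x hx => hp0min hx
  set M : Set ((Fin n → ℝ) × (Fin d → ℝ)) := PMI ∩ {x | f x ≤ f p0} with hMdef
  have hMne : M.Nonempty := ⟨p0, hp0mem, le_refl (f p0)⟩
  have hMc : IsCompact M := hPMIc.inter_right (isClosed_le hcont continuous_const)
  have hMextreme : IsExtreme ℝ PMI M := by
    constructor
    · exact Set.inter_subset_left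
    · rintro x1 hx1 x2 hx2 x ⟨hxP, hxle⟩ ⟨a, b, ha, hb, hab, rfl⟩
      have hcc := hconc.2 (Set.mem_univ x1) (Set.mem_univ x2) ha.le hb.le hab
      rw [smul_eq_mul, smul_eq_mul] at hcc
      have h1 : f p0 ≤ f x1 := hp0min' x1 hx1
      have h2 : f p0 ≤ f x2 := hp0min' x2 hx2
      have hxle' : f (a • x1 + b • x2) ≤ f p0 := hxle
      have hfp0 : a * f p0 + b * f p0 = f p0 := by rw [← add_mul, hab, one_mul]
      have hA : a * f x1 ≤ a * f p0 := by
        have := mul_le_mul_of_nonneg_left h2 hb.le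
        linarith
      have hB : b * f x2 ≤ b * f p0 := by
        have := mul_le_mul_of_nonneg_left h1 ha.le
        linarith
      exact ⟨hx1, le_of_mul_le_mul_left hA ha⟩
  obtain ⟨q, hq⟩ := hMc.extremePoints_nonempty hMne
  have hqPMI : q ∈ Set.extremePoints ℝ PMI :=
    hMextreme.extremePoints_subset_extremePoints hq
  have hqK : q ∈ P ∩ MI := by
    have := hqPMI
    rw [hPMI] at this
    exact extremePoints_convexHull_subset this
  have hqmin : ∀ r ∈ PMI, f q ≤ f r := by
    intro r hr
    exact le_trans hq.1.2 (hp0min' r hr)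
  refine ⟨q, hqPMI, hqK, hqmin, ?_⟩
  apply IsLeast.csInf_eq
  constructor
  · exact ⟨q, hqK, rfl⟩
  · rintro _ ⟨x, hx, rfl⟩
    exact hqmin x (hKsub hx)
end
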